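/- arXiv:1705.10963 — 2 statements merged into one kernel-verified Lean document; each statement's English description precedes it below -/
import Mathlib

section
/- Let a, p, b, q ∈ ℝ^d with F_{ap} ≠ F_{bq} and F_{ap} ∩ F_{bq} ≠ {0}. Then F_{ap} ∩ F_{bq} = (1 + ½e_{d+1}e_{d+2}i(p))·β·Cl_{d−1}^0·α·(1 − ½e_{d+1}e_{d+2}i(a)) for any α, β ∈ Spin(d) satisfying α·(i(b−a)/‖b−a‖)·α⁻¹ = e_d and β·e_d·β⁻¹ = i(q−p)/‖q−p‖. -/
noncomputable section

open CliffordAlgebra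

/-- The negative definite quadratic form `v ↦ -‖v‖²` on `ℝ^n`. -/
def Qn (n : ℕ) : QuadraticForm ℝ (Fin n → ℝ) :=
  QuadraticMap.weightedSumSquares ℝ (fun _ : Fin n => (-1 : ℝ))

/-- The Clifford algebra `Cl_n = Cl(ℝ^n, -‖·‖²)`, with generators `e_1, …, e_n`
satisfying `e_j² = -1` and `e_je_k = -e_ke_j` for `j ≠ k`. -/
abbrev Cl (n : ℕ) := CliffordAlgebra (Qn n)

/-- The generators `e_1, …, e_n` of `Cl_n` (0-indexed). -/
def gC (n : ℕ) (j : Fin n) : Cl n := CliffordAlgebra.ι (Qn n) (Pi.single j 1)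

/-- The conjugate `x̄ = α(t(x))`, where `α` is the grade involution and `t` the reversal. -/
def conjC (n : ℕ) (x : Cl n) : Cl n := reverse (involute x)

/-- The linear embedding `i : ℝ^n → Cl_n`. -/
def iC (n : ℕ) (v : Fin n → ℝ) : Cl n := CliffordAlgebra.ι (Qn n) v

/-- Products of distinct generators of `Cl_n`, in increasing order of index. -/
def sprodC (n : ℕ) (s : Finset (Fin n)) : Cl n := ((s.sort (· ≤ ·)).map (gC n)).prod

/-- The even part `Cl_n^0`: the span of `1` and the products of an even number of
distinct generators. -/
def ClE0 (n : ℕ) : Submodule ℝ (Cl n) :=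
  Submodule.span ℝ {x | ∃ s : Finset (Fin n), Even s.card ∧ x = sprodC n s}

/-- The span of the `m`-terms of `Cl_n`: real multiples of products of `m` distinct
generators. -/
def mTermsC (n m : ℕ) : Submodule ℝ (Cl n) :=
  Submodule.span ℝ {x | ∃ s : Finset (Fin n), s.card = m ∧ x = sprodC n s}

/-- `Spin(n)` inside `Cl_n`. -/
def SpinC (n : ℕ) : Set (Cl n) :=
  {x | x ∈ ClE0 n ∧ x * conjC n x = 1 ∧
    ∀ v : Fin n → ℝ, ∃ w : Fin n → ℝ, x * iC n v * conjC n x = iC n w}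

/-- The coefficient of `1` of an element of `Cl_n` (computed via the normalized trace
of left-multiplication, which agrees with the coefficient of `1` w.r.t. the standard
monomial basis since `dim Cl_n = 2^n`). -/
def coeff1C (n : ℕ) (x : Cl n) : ℝ :=
  (2 ^ n : ℝ)⁻¹ * LinearMap.trace ℝ (Cl n) (LinearMap.mulLeft ℝ x)

/-- `X_d`, realized as the dual numbers over `Cl_{d+1}`; the dual-number generator `ε`
is central with `ε² = 0` and plays the role of `e_{d+2}`. -/
abbrev Xa (d : ℕ) := DualNumber (Cl (d + 1))

namespace X

variable (d : ℕ)

/-- `e_1, …, e_{d+1}` (0-indexed) inside `X_d`. -/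
def e (j : Fin (d + 1)) : Xa d := TrivSqZeroExt.inl (gC (d + 1) j)

/-- `e_{d+2}`. -/
def eps : Xa d := DualNumber.eps

/-- The generator `e_{d+1}`. -/
def eL : Xa d := e d (Fin.last d)

/-- The embedding of `ℝ^k` into `X_d` using the first `k` generators. -/
def iK (k : ℕ) (v : Fin k → ℝ) : Xa d :=
  TrivSqZeroExt.inl (CliffordAlgebra.ι (Qn (d + 1))
    (fun j : Fin (d + 1) => if h : (j : ℕ) < k then v ⟨j, h⟩ else 0))

/-- `i : ℝ^d → X_d`. -/
def iMap (v : Fin d → ℝ) : Xa d := iK d d v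

/-- The conjugate `x̄ = α(t(x))` on `X_d`. -/
def conj (x : Xa d) : Xa d :=
  TrivSqZeroExt.inl (conjC (d + 1) (TrivSqZeroExt.fst x)) +
    TrivSqZeroExt.inr (conjC (d + 1) (TrivSqZeroExt.snd x))

/-- The norm `N(x) = x·x̄`. -/
def Nm (x : Xa d) : Xa d := x * conj d x

/-- The generating family of `Z_d^0`: `e_1, …, e_d` and `e_{d+1}e_{d+2}`. -/
def zgen (j : Fin (d + 1)) : Xa d := if (j : ℕ) < d then e d j else eL d * eps d

/-- Products of distinct elements of a family, in increasing order of index. -/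
def sprod (f : Fin (d + 1) → Xa d) (s : Finset (Fin (d + 1))) : Xa d :=
  ((s.sort (· ≤ ·)).map f).prod

/-- `Z_d^0`: the span of `1` and the products of an even number of distinct elements
of `{e_1, …, e_d, e_{d+1}e_{d+2}}`. -/
def Z0 : Submodule ℝ (Xa d) :=
  Submodule.span ℝ {x | ∃ s : Finset (Fin (d + 1)), Even s.card ∧ x = sprod d (zgen d) s}

/-- The span of the `m`-terms of `Z_d^0`. -/
def Zterms (m : ℕ) : Submodule ℝ (Xa d) :=
  Submodule.span ℝ {x | ∃ s : Finset (Fin (d + 1)), s.card = m ∧ x = sprod d (zgen d) s}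

/-- The even Clifford algebra `Cl_k^0` (for `k ≤ d`), viewed inside `X_d`. -/
def ClE (k : ℕ) : Submodule ℝ (Xa d) :=
  Submodule.span ℝ {x | ∃ s : Finset (Fin (d + 1)),
    (∀ j ∈ s, (j : ℕ) < k) ∧ Even s.card ∧ x = sprod d (e d) s}

/-- `Spun(d)`. -/
def Spun : Set (Xa d) :=
  {z | z ∈ Z0 d ∧ Nm d z = 1 ∧
    ∀ v : Fin d → ℝ, ∃ w : Fin d → ℝ,
      z * (eps d * iMap d v + eL d) * conj d z = eps d * iMap d w + eL d}

/-- `Spin(k)` (for `k ≤ d`), viewed inside `X_d`. -/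
def Spin (k : ℕ) : Set (Xa d) :=
  {x | x ∈ ClE d k ∧ Nm d x = 1 ∧
    ∀ v : Fin k → ℝ, ∃ w : Fin k → ℝ, x * iK d k v * conj d x = iK d k w}

/-- `T_{ap}`: the elements of `Spun(d)` whose action takes `a` to `p`. -/
def T (a p : Fin d → ℝ) : Set (Xa d) :=
  {x | x ∈ Spun d ∧ x * (eps d * iMap d a + eL d) * conj d x = eps d * iMap d p + eL d}

/-- `F_{ap} = (1 + ½e_{d+1}e_{d+2}i(p))·Cl_d^0·(1 − ½e_{d+1}e_{d+2}i(a))`. -/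
def F (a p : Fin d → ℝ) : Set (Xa d) :=
  (fun y => (1 + (2 : ℝ)⁻¹ • (eL d * eps d * iMap d p)) * y *
      (1 - (2 : ℝ)⁻¹ • (eL d * eps d * iMap d a))) '' (ClE d d : Set (Xa d))

/-- The coefficient of `1` of an element of `X_d`. -/
def c1 (x : Xa d) : ℝ := coeff1C (d + 1) (TrivSqZeroExt.fst x)

/-- The index set for the 2-term coordinates of `Z_d^0`; it has `d(d+1)/2` elements.
A pair `(j,k)` with `k < last` indexes the 2-term `e_{j+1}e_{k+1}`, while a pair
`(j, last)` indexes the 2-term `e_{j+1}e_{d+1}e_{d+2}`. -/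
abbrev Idx := {p : Fin (d + 1) × Fin (d + 1) // p.1 < p.2}

/-- The coefficient of the 2-term indexed by `p`. -/
def c2 (p : Idx d) (x : Xa d) : ℝ :=
  if (p.1.2 : ℕ) < d
  then coeff1C (d + 1) (gC (d + 1) p.1.2 * gC (d + 1) p.1.1 * TrivSqZeroExt.fst x)
  else coeff1C (d + 1) (gC (d + 1) p.1.2 * gC (d + 1) p.1.1 * TrivSqZeroExt.snd x)

/-- The hyperplane `H_0 = {x₁ = 0}` (coefficient of `1` vanishes). -/
def H0 : Set (Xa d) := {x | c1 d x = 0}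

/-- The map `η_d = π' ∘ π`: scale so that the coefficient of `1` is `1`, then keep only
the 2-term coordinates. -/
def eta (x : Xa d) : Idx d → ℝ := fun p => (c1 d x)⁻¹ * c2 d p x

/-- `Spun(d)_+`: elements of `Spun(d)` with positive coefficient of `1`. -/
def SpunP : Set (Xa d) := {x | x ∈ Spun d ∧ 0 < c1 d x}

/-- `L_{ap} = η_d(T_{ap} \ H_0)`. -/
def L (a p : Fin d → ℝ) : Set (Idx d → ℝ) := eta d '' (T d a p \ H0 d)

end X

namespace Aux

open CliffordAlgebra

variable {n : ℕ}

lemma Qn_apply (v : Fin n → ℝ) : Qn n v = -∑ i, v i * v i := by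
  simp [Qn, QuadraticMap.weightedSumSquares_apply, Finset.sum_neg_distrib]

lemma gC_mul_self (j : Fin n) : gC n j * gC n j = -1 := by
  rw [gC, ι_sq_scalar, Qn_apply]
  have : ∑ i, (Pi.single j (1:ℝ) : Fin n → ℝ) i * (Pi.single j (1:ℝ) : Fin n → ℝ) i = 1 := by
    rw [Finset.sum_eq_single j] <;> simp +contextual [Pi.single_apply]
  rw [this]; simp

lemma gC_anticomm {i j : Fin n} (h : i ≠ j) : gC n i * gC n j = -(gC n j * gC n i) := by
  have h2 : gC n i * gC n j + gC n j * gC n i = 0 := by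
    rw [gC, gC, ι_mul_ι_add_swap]
    have hp : QuadraticMap.polar (Qn n) (Pi.single i 1) (Pi.single j 1) = 0 := by
      rw [QuadraticMap.polar, Qn_apply, Qn_apply, Qn_apply]
      have e1 : ∀ (a b : Fin n → ℝ), ∑ k, (a + b) k * (a + b) k
          = (∑ k, a k * a k) + ((∑ k, b k * b k) + ∑ k, 2 * (a k * b k)) := by
        intro a b
        rw [← Finset.sum_add_distrib, ← Finset.sum_add_distrib]
        apply Finset.sum_congr rfl; intro k _; simp [Pi.add_apply]; ring
      rw [e1]
      have e2 : ∑ k, 2 * ((Pi.single i (1:ℝ) : Fin n → ℝ) k * (Pi.single j (1:ℝ) : Fin n → ℝ) k) = 0 := by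
        apply Finset.sum_eq_zero; intro k _
        rcases eq_or_ne k i with rfl | hk
        · rw [Pi.single_eq_of_ne h]; ring
        · rw [Pi.single_eq_of_ne hk]; ring
      rw [e2]; ring
    rw [hp]; simp
  exact eq_neg_of_add_eq_zero_left h2

end Aux
namespace Aux2
open CliffordAlgebra Aux
open scoped List

variable {n : ℕ}

lemma apply_mem_of_span {M M₂ : Type*} [AddCommGroup M] [Module ℝ M]
    [AddCommGroup M₂] [Module ℝ M₂] (f : M →ₗ[ℝ] M₂) {S : Set M} {T : Submodule ℝ M₂}
    (h : ∀ x ∈ S, f x ∈ T) {x} (hx : x ∈ Submodule.span ℝ S) : f x ∈ T := by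
  have h2 : Submodule.span ℝ S ≤ T.comap f := Submodule.span_le.mpr h
  exact h2 hx

lemma sprodC_empty : sprodC n ∅ = 1 := by simp [sprodC]

lemma sprodC_singleton (j : Fin n) : sprodC n {j} = gC n j := by simp [sprodC]

lemma sprodC_insert_min {j : Fin n} {s : Finset (Fin n)} (h : ∀ k ∈ s, j < k) :
    sprodC n (insert j s) = gC n j * sprodC n s := by
  have hns : j ∉ s := fun hj => lt_irrefl j (h j hj)
  rw [sprodC, Finset.sort_insert (r := (· ≤ ·)) (fun b hb => le_of_lt (h b hb)) hns]
  simp [sprodC]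

lemma sprodC_insert_max {j : Fin n} {s : Finset (Fin n)} (h : ∀ k ∈ s, k < j) :
    sprodC n (insert j s) = sprodC n s * gC n j := by
  have hns : j ∉ s := fun hj => lt_irrefl j (h j hj)
  have hperm : (insert j s).sort (· ≤ ·) ~ s.sort (· ≤ ·) ++ [j] := by
    refine (Finset.sort_perm_toList (r := (· ≤ ·)) (insert j s)).trans ?_
    refine (Finset.toList_insert hns).trans ?_
    refine (List.Perm.cons j (Finset.sort_perm_toList (r := (· ≤ ·)) s).symm).trans ?_
    exact (List.perm_append_singleton j _).symm
  have hsorted : List.Pairwise (· ≤ ·) (s.sort (· ≤ ·) ++ [j]) := by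
    refine List.pairwise_append.mpr ⟨Finset.pairwise_sort _ _, List.pairwise_singleton _ j, ?_⟩
    intro x hx y hy
    rw [List.mem_singleton] at hy
    subst hy
    exact le_of_lt (h x ((Finset.mem_sort _).mp hx))
  have heq := hperm.eq_of_pairwise' (Finset.pairwise_sort _ _) hsorted
  rw [sprodC, heq]
  simp [sprodC]

/-- Generators with support in `u` and parity `m`. -/
def gset (u : Finset (Fin n)) (m : ℕ) : Set (Cl n) :=
  {x | ∃ t : Finset (Fin n), t ⊆ u ∧ t.card % 2 = m % 2 ∧ x = sprodC n t}

def gspan (u : Finset (Fin n)) (m : ℕ) : Submodule ℝ (Cl n) :=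
  Submodule.span ℝ (gset u m)

lemma gspan_parity {u : Finset (Fin n)} {m m' : ℕ} (h : m % 2 = m' % 2) :
    gspan u m = gspan u m' := by
  unfold gspan gset; rw [h]

lemma gspan_mono {u v : Finset (Fin n)} {m : ℕ} (h : u ⊆ v) : gspan u m ≤ gspan v m :=
  Submodule.span_mono (fun x ⟨t, ht, hc, he⟩ => ⟨t, ht.trans h, hc, he⟩)

lemma sprodC_mem_gspan {t u : Finset (Fin n)} {m : ℕ} (ht : t ⊆ u) (hc : t.card % 2 = m % 2) :
    sprodC n t ∈ gspan u m :=
  Submodule.subset_span ⟨t, ht, hc, rfl⟩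

lemma gC_mul_sprodC_mem (s : Finset (Fin n)) : ∀ j : Fin n,
    gC n j * sprodC n s ∈ gspan (insert j s) (s.card + 1) := by
  induction s using Finset.strongInduction with
  | _ s ih =>
    intro j
    rcases s.eq_empty_or_nonempty with rfl | hne
    · rw [sprodC_empty, mul_one, ← sprodC_singleton j]
      exact sprodC_mem_gspan (by simp) (by simp)
    · have has : s.min' hne ∈ s := s.min'_mem hne
      set a := s.min' hne with ha
      set s' := s.erase a with hs'
      have hss : s = insert a s' := (Finset.insert_erase has).symm
      have hans' : a ∉ s' := Finset.notMem_erase a s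
      have hmin : ∀ k ∈ s', a < k := fun k hk =>
        lt_of_le_of_ne (s.min'_le k (Finset.mem_of_mem_erase hk))
          (Ne.symm (Finset.ne_of_mem_erase hk))
      have hcard : s.card = s'.card + 1 := by
        rw [hss, Finset.card_insert_of_notMem hans']
      have hprodeq : sprodC n s = gC n a * sprodC n s' := by
        rw [hss, sprodC_insert_min hmin]
      rcases eq_or_ne j a with rfl | hja
      · rw [hprodeq, ← mul_assoc, gC_mul_self, neg_one_mul]
        refine Submodule.neg_mem _ (sprodC_mem_gspan ?_ ?_)
        · rw [hss]; exact (Finset.subset_insert a s').trans (Finset.subset_insert a _)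
        · omega
      · rcases lt_or_gt_of_ne hja with hj | hj
        · have hall : ∀ k ∈ s, j < k := fun k hk => lt_of_lt_of_le hj (s.min'_le k hk)
          rw [← sprodC_insert_min hall]
          refine sprodC_mem_gspan (subset_refl _) ?_
          rw [Finset.card_insert_of_notMem (fun hmem => lt_irrefl j (hall j hmem))]
        · have IH := ih s' (Finset.erase_ssubset has) j
          rw [hprodeq, ← mul_assoc, gC_anticomm hja, neg_mul, mul_assoc]
          refine Submodule.neg_mem _ ?_
          refine apply_mem_of_span (LinearMap.mulLeft ℝ (gC n a)) ?_ IH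
          rintro x ⟨t, htu, htc, rfl⟩
          have hat : ∀ k ∈ t, a < k := by
            intro k hk
            rcases Finset.mem_insert.mp (htu hk) with rfl | hk'
            · exact hj
            · exact hmin k hk'
          simp only [LinearMap.mulLeft_apply]
          rw [← sprodC_insert_min hat]
          refine sprodC_mem_gspan ?_ ?_
          · intro k hk
            rcases Finset.mem_insert.mp hk with rfl | hk'
            · rw [hss]; exact Finset.mem_insert.mpr (Or.inr (Finset.mem_insert_self a s'))
            · rcases Finset.mem_insert.mp (htu hk') with rfl | hk''
              · exact Finset.mem_insert_self _ _
              · exact Finset.mem_insert.mpr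
                  (Or.inr (by rw [hss]; exact Finset.mem_insert.mpr (Or.inr hk'')))
          · rw [Finset.card_insert_of_notMem (fun hmem => lt_irrefl a (hat a hmem))]
            omega

lemma gC_mul_gspan {j : Fin n} {u : Finset (Fin n)} {m : ℕ} {x : Cl n}
    (hx : x ∈ gspan u m) : gC n j * x ∈ gspan (insert j u) (m + 1) := by
  refine apply_mem_of_span (LinearMap.mulLeft ℝ (gC n j)) ?_ hx
  rintro y ⟨t, htu, htc, rfl⟩
  simp only [LinearMap.mulLeft_apply]
  refine gspan_mono (Finset.insert_subset_insert j htu) ?_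
  have h2 := gC_mul_sprodC_mem t j
  rwa [gspan_parity (show (t.card + 1) % 2 = (m + 1) % 2 by omega)] at h2

lemma sprodC_mul_gspan (s : Finset (Fin n)) : ∀ (u : Finset (Fin n)) (m : ℕ) (x : Cl n),
    x ∈ gspan u m → sprodC n s * x ∈ gspan (s ∪ u) (s.card + m) := by
  induction s using Finset.strongInduction with
  | _ s ih =>
    intro u m x hx
    rcases s.eq_empty_or_nonempty with rfl | hne
    · rw [sprodC_empty, one_mul, Finset.empty_union]
      rwa [gspan_parity (show (Finset.card ∅ + m) % 2 = m % 2 by simp)]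
    · have has : s.min' hne ∈ s := s.min'_mem hne
      set a := s.min' hne with ha
      set s' := s.erase a with hs'
      have hss : s = insert a s' := (Finset.insert_erase has).symm
      have hans' : a ∉ s' := Finset.notMem_erase a s
      have hmin : ∀ k ∈ s', a < k := fun k hk =>
        lt_of_le_of_ne (s.min'_le k (Finset.mem_of_mem_erase hk))
          (Ne.symm (Finset.ne_of_mem_erase hk))
      have hcard : s.card = s'.card + 1 := by
        rw [hss, Finset.card_insert_of_notMem hans']
      have hprodeq : sprodC n s = gC n a * sprodC n s' := by
        rw [hss, sprodC_insert_min hmin]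
      have IH := ih s' (Finset.erase_ssubset has) u m x hx
      have h2 := gC_mul_gspan (j := a) IH
      rw [hprodeq, mul_assoc]
      have hins : insert a (s' ∪ u) = s ∪ u := by rw [hss, Finset.insert_union]
      rw [hins] at h2
      rwa [gspan_parity (show (s'.card + m + 1) % 2 = (s.card + m) % 2 by omega)] at h2

lemma gspan_mul_gspan {u v : Finset (Fin n)} {m m' : ℕ} {x y : Cl n}
    (hx : x ∈ gspan u m) (hy : y ∈ gspan v m') : x * y ∈ gspan (u ∪ v) (m + m') := by
  refine apply_mem_of_span (LinearMap.mulRight ℝ y) ?_ hx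
  rintro z ⟨t, htu, htc, rfl⟩
  simp only [LinearMap.mulRight_apply]
  have h2 := sprodC_mul_gspan t v m' y hy
  have h3 : t ∪ v ⊆ u ∪ v := Finset.union_subset_union htu (subset_refl v)
  exact gspan_mono h3 (by rwa [gspan_parity (show (t.card + m') % 2 = (m + m') % 2 by omega)] at h2)

end Aux2
namespace Aux3
open CliffordAlgebra Aux Aux2

variable {n : ℕ}

lemma one_mem_gspan (u : Finset (Fin n)) : (1 : Cl n) ∈ gspan u 0 := by
  rw [← sprodC_empty]
  exact sprodC_mem_gspan (Finset.empty_subset u) (by simp)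

lemma gC_eq_iota (j : Fin n) : gC n j = ι (Qn n) (Pi.single j 1) := rfl

lemma iota_mem_gspan (v : Fin n → ℝ) : ι (Qn n) v ∈ gspan (Finset.univ : Finset (Fin n)) 1 := by
  have hv : v = ∑ j : Fin n, v j • (Pi.single j (1:ℝ) : Fin n → ℝ) := by
    funext k
    rw [Finset.sum_apply]
    simp [Pi.single_apply]
  rw [hv, map_sum]
  refine Submodule.sum_mem _ (fun j _ => ?_)
  rw [map_smul]
  refine Submodule.smul_mem _ _ ?_
  rw [← gC_eq_iota, ← sprodC_singleton]
  exact sprodC_mem_gspan (Finset.subset_univ _) (by simp)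

/-- The span of all the monomials is everything. -/
lemma gspan_sup_eq_top :
    (gspan (Finset.univ : Finset (Fin n)) 0 ⊔ gspan Finset.univ 1 : Submodule ℝ (Cl n)) = ⊤ := by
  have key : ∀ x : Cl n, x ∈ (gspan (Finset.univ : Finset (Fin n)) 0 ⊔ gspan Finset.univ 1 : Submodule ℝ (Cl n)) := by
    intro x
    induction x using CliffordAlgebra.induction with
    | algebraMap r =>
        rw [Algebra.algebraMap_eq_smul_one]
        exact Submodule.mem_sup_left (Submodule.smul_mem _ _ (one_mem_gspan _))
    | ι v => exact Submodule.mem_sup_right (iota_mem_gspan v)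
    | mul x y hx hy =>
        obtain ⟨x0, hx0, x1, hx1, hxe⟩ := Submodule.mem_sup.mp hx
        obtain ⟨y0, hy0, y1, hy1, hye⟩ := Submodule.mem_sup.mp hy
        have h00 := gspan_mul_gspan hx0 hy0
        have h01 := gspan_mul_gspan hx0 hy1
        have h10 := gspan_mul_gspan hx1 hy0
        have h11 := gspan_mul_gspan hx1 hy1
        rw [Finset.union_self] at h00 h01 h10 h11
        rw [gspan_parity (show (0+0) % 2 = 0 % 2 by norm_num)] at h00
        rw [gspan_parity (show (0+1) % 2 = 1 % 2 by norm_num)] at h01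
        rw [gspan_parity (show (1+0) % 2 = 1 % 2 by norm_num)] at h10
        rw [gspan_parity (show (1+1) % 2 = 0 % 2 by norm_num)] at h11
        have hexp : x * y = (x0*y0 + x1*y1) + (x0*y1 + x1*y0) := by
          rw [← hxe, ← hye]; noncomm_ring
        rw [hexp]
        exact Submodule.add_mem _
          (Submodule.mem_sup_left (Submodule.add_mem _ h00 h11))
          (Submodule.mem_sup_right (Submodule.add_mem _ h01 h10))
    | add x y hx hy => exact Submodule.add_mem _ hx hy
  rw [eq_top_iff]
  exact fun x _ => key x

instance : Module.Finite ℝ (Cl n) := by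
  classical
  refine ⟨⟨Finset.univ.image (sprodC n), ?_⟩⟩
  rw [eq_top_iff, ← gspan_sup_eq_top]
  refine sup_le ?_ ?_ <;>
  · refine Submodule.span_le.mpr ?_
    rintro x ⟨t, -, -, rfl⟩
    refine Submodule.subset_span ?_
    simp only [Finset.coe_image, Finset.coe_univ, Set.image_univ]
    exact Set.mem_range_self t

/-- In the (finite-dimensional) Clifford algebra, a right inverse is a left inverse. -/
lemma mul_eq_one_symm {x y : Cl n} (h : x * y = 1) : y * x = 1 := by
  have hfd : FiniteDimensional ℝ (Cl n) := inferInstance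
  have h1 : LinearMap.mulLeft ℝ x * LinearMap.mulLeft ℝ y = 1 := by
    refine LinearMap.ext fun z => ?_
    simp [Module.End.mul_apply, ← mul_assoc, h]
  have h2 := mul_eq_one_comm.mp h1
  have h3 := DFunLike.congr_fun h2 (1 : Cl n)
  simpa [Module.End.mul_apply] using h3

lemma sum_sq_pos {k : ℕ} {v : Fin k → ℝ} (hv : v ≠ 0) : 0 < ∑ i, v i * v i := by
  obtain ⟨i, hi⟩ := Function.ne_iff.mp hv
  refine Finset.sum_pos' (fun j _ => mul_self_nonneg _) ⟨i, Finset.mem_univ i, ?_⟩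
  exact mul_self_pos.mpr hi

lemma Qn_ne_zero {v : Fin n → ℝ} (hv : v ≠ 0) : Qn n v ≠ 0 := by
  rw [Qn_apply]
  have := sum_sq_pos hv
  intro h
  rw [neg_eq_zero] at h
  linarith

lemma iota_mul_cancel_left {v : Fin n → ℝ} (hv : v ≠ 0) {y : Cl n}
    (h : ι (Qn n) v * y = 0) : y = 0 := by
  have h2 : ι (Qn n) v * (ι (Qn n) v * y) = 0 := by rw [h, mul_zero]
  rw [← mul_assoc, ι_sq_scalar, Algebra.algebraMap_eq_smul_one, smul_mul_assoc, one_mul] at h2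
  exact (smul_eq_zero_iff_right (Qn_ne_zero hv)).mp h2

lemma iota_mul_cancel_right {v : Fin n → ℝ} (hv : v ≠ 0) {y : Cl n}
    (h : y * ι (Qn n) v = 0) : y = 0 := by
  have h2 : (y * ι (Qn n) v) * ι (Qn n) v = 0 := by rw [h, zero_mul]
  rw [mul_assoc, ι_sq_scalar, Algebra.algebraMap_eq_smul_one, mul_smul_comm, mul_one] at h2
  exact (smul_eq_zero_iff_right (Qn_ne_zero hv)).mp h2

lemma neg_one_pow_smul_neg_one_pow_smul (k : ℕ) (x : Cl n) :
    ((-1:ℝ)^k) • ((-1:ℝ)^k) • x = x := by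
  rw [smul_smul, ← mul_pow]
  norm_num

/-- moving a generator through a product of other generators -/
lemma gC_mul_list (j : Fin n) : ∀ (l : List (Fin n)), j ∉ l →
    gC n j * (l.map (gC n)).prod = ((-1:ℝ)^l.length) • ((l.map (gC n)).prod * gC n j)
  | [], _ => by simp
  | a :: l, hj => by
    have hja : j ≠ a := fun h => hj (h ▸ List.mem_cons_self)
    have hjl : j ∉ l := fun h => hj (List.mem_cons_of_mem a h)
    simp only [List.map_cons, List.prod_cons, List.length_cons]
    rw [← mul_assoc, gC_anticomm hja, neg_mul, mul_assoc, gC_mul_list j l hjl,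
      mul_smul_comm, ← neg_smul, ← mul_assoc]
    congr 1
    ring

lemma list_mul_gC (j : Fin n) (l : List (Fin n)) (hj : j ∉ l) :
    (l.map (gC n)).prod * gC n j = ((-1:ℝ)^l.length) • (gC n j * (l.map (gC n)).prod) := by
  rw [gC_mul_list j l hj, neg_one_pow_smul_neg_one_pow_smul]

lemma involute_sprodC (s : Finset (Fin n)) :
    involute (sprodC n s) = ((-1:ℝ)^s.card) • sprodC n s := by
  rw [sprodC]
  have : (s.sort (· ≤ ·)).map (gC n) = ((s.sort (· ≤ ·)).map (fun j => Pi.single j (1:ℝ))).map (ι (Qn n)) := by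
    rw [List.map_map]; rfl
  rw [this, involute_prod_map_ι]
  rw [List.length_map, Finset.length_sort]

lemma reverse_list_prod : ∀ (l : List (Fin n)), l.Nodup →
    ∃ k : ℕ, (l.map (gC n)).reverse.prod = ((-1:ℝ)^k) • (l.map (gC n)).prod
  | [], _ => ⟨0, by simp⟩
  | a :: l, hnd => by
    have hal : a ∉ l := (List.nodup_cons.mp hnd).1
    obtain ⟨k, hk⟩ := reverse_list_prod l (List.nodup_cons.mp hnd).2
    refine ⟨k + l.length, ?_⟩
    simp only [List.map_cons, List.reverse_cons, List.prod_append, List.prod_cons,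
      List.prod_nil, mul_one]
    rw [hk, smul_mul_assoc, list_mul_gC a l hal, smul_smul, pow_add]

lemma reverse_sprodC (s : Finset (Fin n)) :
    ∃ k : ℕ, reverse (Q := Qn n) (sprodC n s) = ((-1:ℝ)^k) • sprodC n s := by
  rw [sprodC]
  have h1 : (s.sort (· ≤ ·)).map (gC n) = ((s.sort (· ≤ ·)).map (fun j => Pi.single j (1:ℝ))).map (ι (Qn n)) := by
    rw [List.map_map]; rfl
  rw [h1, reverse_prod_map_ι, ← h1]
  exact reverse_list_prod _ (s.sort_nodup _)

lemma conjC_sprodC (s : Finset (Fin n)) :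
    ∃ k : ℕ, conjC n (sprodC n s) = ((-1:ℝ)^k) • sprodC n s := by
  obtain ⟨k, hk⟩ := reverse_sprodC s
  refine ⟨s.card + k, ?_⟩
  rw [conjC, involute_sprodC, map_smul, hk, smul_smul, pow_add]

/-- conjugation preserves the monomial spans -/
lemma conjC_mem_gspan {u : Finset (Fin n)} {m : ℕ} {x : Cl n} (hx : x ∈ gspan u m) :
    conjC n x ∈ gspan u m := by
  have : conjC n x = (reverse (Q := Qn n) ∘ₗ (involute (Q := Qn n) : Cl n →ₐ[ℝ] Cl n).toLinearMap) x := rfl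
  rw [this]
  refine apply_mem_of_span _ ?_ hx
  rintro y ⟨t, htu, htc, rfl⟩
  obtain ⟨k, hk⟩ := conjC_sprodC (n := n) t
  have : (reverse (Q := Qn n) ∘ₗ (involute (Q := Qn n) : Cl n →ₐ[ℝ] Cl n).toLinearMap) (sprodC n t) = conjC n (sprodC n t) := rfl
  rw [this, hk]
  exact Submodule.smul_mem _ _ (sprodC_mem_gspan htu htc)

/-- a generator not involved in the span commutes with even elements -/
lemma gC_comm_even {j : Fin n} {u : Finset (Fin n)} (hj : j ∉ u) {x : Cl n}
    (hx : x ∈ gspan u 0) : gC n j * x = x * gC n j := by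
  induction hx using Submodule.span_induction with
  | mem y hy =>
      obtain ⟨t, htu, htc, rfl⟩ := hy
      have hjt : j ∉ t.sort (· ≤ ·) := by
        rw [Finset.mem_sort]
        exact fun h => hj (htu h)
      rw [sprodC, gC_mul_list j _ hjt, Finset.length_sort]
      rw [Even.neg_one_pow (Nat.even_iff.mpr htc), one_smul]
  | zero => simp
  | add y z _ _ hy hz => rw [mul_add, add_mul, hy, hz]
  | smul c y _ hy => rw [mul_smul_comm, smul_mul_assoc, hy]

end Aux3
namespace Aux4
open CliffordAlgebra Aux Aux2 Aux3

variable {n : ℕ}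

lemma gC_conj_even {j : Fin n} {u : Finset (Fin n)} (hju : j ∉ u) {x : Cl n}
    (hx : x ∈ gspan u 0) : gC n j * x * gC n j = -x := by
  rw [gC_comm_even hju hx, mul_assoc, gC_mul_self, mul_neg_one]

lemma half_smul_sub_neg (x : Cl n) : (2:ℝ)⁻¹ • (x - -x) = x := by
  rw [sub_neg_eq_add, ← two_smul ℝ, smul_smul]
  norm_num

/-- Projection to the part not involving the top generator `j`. -/
lemma proj_mem {j : Fin n} {u : Finset (Fin n)} (hju : j ∉ u) (hmax : ∀ k ∈ u, k < j)
    {x : Cl n} (hx : x ∈ gspan (insert j u) 0) :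
    (2:ℝ)⁻¹ • (x - gC n j * x * gC n j) ∈ gspan u 0 := by
  have hf : ∀ z : Cl n, (2:ℝ)⁻¹ • (z - gC n j * z * gC n j)
      = (((2:ℝ)⁻¹ • (LinearMap.id - (LinearMap.mulRight ℝ (gC n j)).comp
          (LinearMap.mulLeft ℝ (gC n j)))) : Cl n →ₗ[ℝ] Cl n) z := by
    intro z
    simp [LinearMap.mulRight_apply, LinearMap.mulLeft_apply]
  rw [hf]
  refine apply_mem_of_span _ ?_ hx
  rintro y ⟨t, htu, htc, rfl⟩
  rw [← hf]
  by_cases hjt : j ∈ t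
  · -- the monomial contains j : the projection vanishes
    have htt : t = insert j (t.erase j) := (Finset.insert_erase hjt).symm
    have hmax' : ∀ k ∈ t.erase j, k < j := by
      intro k hk
      rcases Finset.mem_insert.mp (htu (Finset.mem_of_mem_erase hk)) with rfl | hk'
      · exact absurd rfl (Finset.ne_of_mem_erase hk)
      · exact hmax k hk'
    have hprod : sprodC n t = sprodC n (t.erase j) * gC n j := by
      conv_lhs => rw [htt]
      rw [sprodC_insert_max hmax']
    have hodd : (t.erase j).card % 2 = 1 := by
      have h1 := Finset.card_erase_of_mem hjt
      have h2 : 1 ≤ t.card := Finset.card_pos.mpr ⟨j, hjt⟩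
      omega
    have hjl : j ∉ (t.erase j).sort (· ≤ ·) := by
      rw [Finset.mem_sort]
      exact Finset.notMem_erase j t
    have hcommE : gC n j * sprodC n (t.erase j) = -(sprodC n (t.erase j) * gC n j) := by
      rw [sprodC, gC_mul_list j _ hjl, Finset.length_sort,
        Odd.neg_one_pow (Nat.odd_iff.mpr hodd), neg_smul, one_smul]
    have hzero : gC n j * sprodC n t * gC n j = sprodC n t := by
      rw [hprod, ← mul_assoc, mul_assoc (gC n j * sprodC n (t.erase j)), gC_mul_self,
        mul_neg_one, hcommE, neg_neg]
    rw [hzero, sub_self, smul_zero]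
    exact Submodule.zero_mem _
  · -- the monomial does not contain j : the projection is the identity
    have htu' : t ⊆ u := fun k hk => by
      rcases Finset.mem_insert.mp (htu hk) with rfl | hk'
      · exact absurd hk hjt
      · exact hk'
    have hmem : sprodC n t ∈ gspan u 0 := sprodC_mem_gspan htu' htc
    rw [gC_conj_even hju hmem, half_smul_sub_neg]
    exact hmem

/-- An even element supported on `insert j u` commuting with `gC j` is supported on `u`. -/
lemma comm_mem_erase {j : Fin n} {u : Finset (Fin n)} (hju : j ∉ u) (hmax : ∀ k ∈ u, k < j)
    {x : Cl n} (hx : x ∈ gspan (insert j u) 0) (hcomm : gC n j * x = x * gC n j) :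
    x ∈ gspan u 0 := by
  have h1 : gC n j * x * gC n j = -x := by
    rw [hcomm, mul_assoc, gC_mul_self, mul_neg_one]
  have h2 := proj_mem hju hmax hx
  rwa [h1, half_smul_sub_neg] at h2

/-- If `r • (gC j * x) = s • (x * gC j)` with `r ≠ s` positive then `x = 0`. -/
lemma scaled_comm_eq_zero {j : Fin n} {x : Cl n} {r s : ℝ} (hr : 0 < r) (hs : 0 < s)
    (hrs : r ≠ s) (h : r • (gC n j * x) = s • (x * gC n j)) : x = 0 := by
  have hr0 : r ≠ 0 := ne_of_gt hr
  have h1 : gC n j * x = (r⁻¹ * s) • (x * gC n j) := by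
    rw [mul_smul, ← h, smul_smul, inv_mul_cancel₀ hr0, one_smul]
  have h2 : gC n j * (gC n j * x) = -x := by
    rw [← mul_assoc, gC_mul_self, neg_one_mul]
  have h3 : gC n j * (gC n j * x) = ((r⁻¹*s)*(r⁻¹*s)) • (-x) := by
    rw [h1, mul_smul_comm, ← mul_assoc, h1, smul_mul_assoc, smul_smul,
      mul_assoc x, gC_mul_self, mul_neg_one]
  rw [h2] at h3
  set c := r⁻¹ * s with hc
  have hcpos : 0 < c := mul_pos (inv_pos.mpr hr) hs
  have hc1 : c ≠ 1 := by
    intro h1'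
    exact hrs ((inv_mul_eq_one₀ hr0).mp h1')
  have hx' : x = (c * c) • x := by
    have := h3
    rw [smul_neg] at this
    exact neg_injective this
  have h4 : (1 - c * c) • x = 0 := by
    rw [sub_smul, one_smul, ← hx', sub_self]
  have h5 : (1 - c * c) ≠ 0 := by
    intro hz
    have hcc : c * c = 1 := by linarith
    rcases mul_self_eq_one_iff.mp hcc with h' | h'
    · exact hc1 h'
    · rw [h'] at hcpos; linarith
  exact (smul_eq_zero_iff_right h5).mp h4

end Aux4
namespace Bridge
open CliffordAlgebra Aux Aux2 Aux3 Aux4 TrivSqZeroExt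

variable {d : ℕ}

def inlL (d : ℕ) : Cl (d+1) →ₗ[ℝ] Xa d :=
  (TrivSqZeroExt.inlAlgHom ℝ (Cl (d+1)) (Cl (d+1))).toLinearMap

lemma inlL_apply (x : Cl (d+1)) : inlL d x = TrivSqZeroExt.inl x := rfl

def gLd (d : ℕ) : Cl (d+1) := gC (d+1) (Fin.last d)

def extd (d : ℕ) (v : Fin d → ℝ) : Fin (d + 1) → ℝ :=
  fun j => if h : (j : ℕ) < d then v ⟨j, h⟩ else 0

def ib (d : ℕ) (v : Fin d → ℝ) : Cl (d+1) := ι (Qn (d+1)) (extd d v)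

lemma iMap_eq (v : Fin d → ℝ) : X.iMap d v = TrivSqZeroExt.inl (ib d v) := rfl

lemma extd_sub (u v : Fin d → ℝ) : extd d (u - v) = extd d u - extd d v := by
  funext j; by_cases h : (j : ℕ) < d <;> simp [extd, h]

lemma extd_smul (c : ℝ) (v : Fin d → ℝ) : extd d (c • v) = c • extd d v := by
  funext j; by_cases h : (j : ℕ) < d <;> simp [extd, h]

lemma extd_ne_zero {v : Fin d → ℝ} (hv : v ≠ 0) : extd d v ≠ 0 := by
  obtain ⟨j, hj⟩ := Function.ne_iff.mp hv
  intro h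
  apply hj
  have := congrFun h ⟨(j : ℕ), lt_of_lt_of_le j.isLt (Nat.le_succ d)⟩
  simpa [extd, j.isLt] using this

lemma ib_sub (u v : Fin d → ℝ) : ib d (u - v) = ib d u - ib d v := by
  rw [ib, extd_sub, map_sub]; rfl

lemma ib_smul (c : ℝ) (v : Fin d → ℝ) : ib d (c • v) = c • ib d v := by
  rw [ib, extd_smul, map_smul]; rfl

/-- index sets -/
def uset (d k : ℕ) : Finset (Fin (d+1)) := Finset.univ.filter (fun j => (j : ℕ) < k)

lemma mem_uset {k : ℕ} {j : Fin (d+1)} : j ∈ uset d k ↔ (j : ℕ) < k := by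
  simp [uset]

lemma sprod_e_eq (s : Finset (Fin (d+1))) :
    X.sprod d (X.e d) s = TrivSqZeroExt.inl (sprodC (d+1) s) := by
  rw [X.sprod, sprodC]
  rw [show List.map (X.e d) (s.sort (· ≤ ·))
      = List.map (fun j => (TrivSqZeroExt.inlAlgHom ℝ (Cl (d+1)) (Cl (d+1))) (gC (d+1) j))
        (s.sort (· ≤ ·)) from rfl]
  rw [show List.map (fun j => (TrivSqZeroExt.inlAlgHom ℝ (Cl (d+1)) (Cl (d+1))) (gC (d+1) j))
        (s.sort (· ≤ ·))
      = List.map (⇑(TrivSqZeroExt.inlAlgHom ℝ (Cl (d+1)) (Cl (d+1))))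
          (List.map (gC (d+1)) (s.sort (· ≤ ·))) from (List.map_map).symm]
  rw [← map_list_prod]
  rfl

lemma ClE_eq (k : ℕ) : X.ClE d k = Submodule.map (inlL d) (gspan (uset d k) 0) := by
  rw [X.ClE, gspan, Submodule.map_span]
  congr 1
  ext x
  constructor
  · rintro ⟨s, hs, hev, rfl⟩
    exact ⟨sprodC (d+1) s, ⟨s, fun j hj => mem_uset.mpr (hs j hj), by
      simpa using Nat.even_iff.mp hev, rfl⟩, (sprod_e_eq s).symm⟩
  · rintro ⟨y, ⟨t, ht, hc, rfl⟩, rfl⟩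
    exact ⟨t, fun j hj => mem_uset.mp (ht hj), Nat.even_iff.mpr (by simpa using hc),
      (sprod_e_eq t).symm⟩

lemma conj_inl (r : Cl (d+1)) :
    X.conj d (TrivSqZeroExt.inl r) = TrivSqZeroExt.inl (conjC (d+1) r) := by
  rw [X.conj]
  have h1 : TrivSqZeroExt.snd (TrivSqZeroExt.inl r : Xa d) = 0 := rfl
  have h2 : TrivSqZeroExt.fst (TrivSqZeroExt.inl r : Xa d) = r := rfl
  rw [h1, h2]
  have : conjC (d+1) 0 = 0 := by rw [conjC, map_zero, map_zero]
  rw [this, TrivSqZeroExt.inr_zero, add_zero]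

lemma eL_eps_iMap (v : Fin d → ℝ) :
    X.eL d * X.eps d * X.iMap d v = TrivSqZeroExt.inr (gLd d * ib d v) := by
  rw [X.eL, X.e, X.eps, iMap_eq, DualNumber.eps]
  rw [TrivSqZeroExt.inl_mul_inr, TrivSqZeroExt.inr_mul_inl]
  rw [smul_eq_mul, mul_one]
  rfl

lemma op_smul_eq (r m : Cl (d+1)) : (MulOpposite.op r) • m = m * r := rfl

lemma form (p a : Fin d → ℝ) (y₀ : Cl (d+1)) (hy : gLd d * y₀ = y₀ * gLd d) :
    (1 + (2:ℝ)⁻¹ • (X.eL d * X.eps d * X.iMap d p)) * TrivSqZeroExt.inl y₀ *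
      (1 - (2:ℝ)⁻¹ • (X.eL d * X.eps d * X.iMap d a))
    = TrivSqZeroExt.inl y₀ +
        TrivSqZeroExt.inr ((2:ℝ)⁻¹ • (gLd d * (ib d p * y₀ - y₀ * ib d a))) := by
  rw [eL_eps_iMap, eL_eps_iMap]
  refine TrivSqZeroExt.ext ?_ ?_
  · simp [TrivSqZeroExt.fst_mul, TrivSqZeroExt.fst_add, TrivSqZeroExt.fst_sub]
  · simp only [TrivSqZeroExt.snd_mul, TrivSqZeroExt.fst_mul, TrivSqZeroExt.snd_add,
      TrivSqZeroExt.fst_add, TrivSqZeroExt.snd_sub, TrivSqZeroExt.fst_sub,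
      TrivSqZeroExt.fst_one, TrivSqZeroExt.snd_one, TrivSqZeroExt.fst_inl,
      TrivSqZeroExt.snd_inl, TrivSqZeroExt.fst_inr, TrivSqZeroExt.snd_inr,
      TrivSqZeroExt.snd_smul, TrivSqZeroExt.fst_smul]
    have key : y₀ * (gLd d * ib d a) = gLd d * (y₀ * ib d a) := by
      rw [← mul_assoc, ← hy, mul_assoc]
    simp only [smul_zero, add_zero, zero_add, sub_zero, zero_sub, mul_zero, zero_mul,
      one_mul, mul_one, mul_neg, smul_neg, one_smul, smul_eq_mul,
      MulOpposite.smul_eq_mul_unop, MulOpposite.unop_op]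
    rw [mul_smul_comm, key, mul_sub, smul_sub, smul_mul_assoc, mul_assoc]
    abel

end Bridge
namespace Bridge2
open CliffordAlgebra Aux Aux2 Aux3 Aux4 Bridge TrivSqZeroExt

variable {d : ℕ}

lemma last_not_mem_uset : Fin.last d ∉ uset d d := by
  rw [mem_uset, Fin.val_last]
  omega

lemma commL {y₀ : Cl (d+1)} (h : y₀ ∈ gspan (uset d d) 0) : gLd d * y₀ = y₀ * gLd d :=
  gC_comm_even last_not_mem_uset h

lemma F_iff (a p : Fin d → ℝ) (x : Xa d) :
    x ∈ X.F d a p ↔ ∃ y₀ ∈ gspan (uset d d) 0,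
      x = TrivSqZeroExt.inl y₀ +
        TrivSqZeroExt.inr ((2:ℝ)⁻¹ • (gLd d * (ib d p * y₀ - y₀ * ib d a))) := by
  constructor
  · rintro ⟨y, hy, rfl⟩
    rw [SetLike.mem_coe, ClE_eq] at hy
    obtain ⟨y₀, hy₀, rfl⟩ := Submodule.mem_map.mp hy
    exact ⟨y₀, hy₀, (form p a y₀ (commL hy₀) : _).symm.symm⟩
  · rintro ⟨y₀, hy₀, rfl⟩
    refine ⟨TrivSqZeroExt.inl y₀, ?_, form p a y₀ (commL hy₀)⟩
    rw [SetLike.mem_coe, ClE_eq]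
    exact Submodule.mem_map.mpr ⟨y₀, hy₀, rfl⟩

lemma canon_zero (p a : Fin d → ℝ) :
    TrivSqZeroExt.inl (0 : Cl (d+1)) +
      TrivSqZeroExt.inr ((2:ℝ)⁻¹ • (gLd d * (ib d p * 0 - 0 * ib d a))) = (0 : Xa d) := by
  simp

lemma zero_mem_F (a p : Fin d → ℝ) : (0 : Xa d) ∈ X.F d a p := by
  rw [F_iff]
  exact ⟨0, Submodule.zero_mem _, (canon_zero p a).symm⟩

lemma cancel_gL {A B : Cl (d+1)} (h : gLd d * A = gLd d * B) : A = B := by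
  have h2 := congrArg (fun t => gLd d * t) h
  simp only [← mul_assoc] at h2
  rw [gLd, gC_mul_self] at h2
  simp only [neg_one_mul] at h2
  exact neg_injective h2

lemma sub_swap_iff {A B C D : Cl (d+1)} : A - B = C - D ↔ C - A = D - B := by
  rw [sub_eq_sub_iff_add_eq_add, sub_eq_sub_iff_add_eq_add]
  constructor
  · intro h; rw [← h]; exact add_comm A D
  · intro h; rw [h]; exact add_comm A D

lemma canon_eq_iff {y z : Cl (d+1)} (p a q b : Fin d → ℝ) :
    TrivSqZeroExt.inl y + TrivSqZeroExt.inr ((2:ℝ)⁻¹ • (gLd d * (ib d p * y - y * ib d a)))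
      = TrivSqZeroExt.inl z + TrivSqZeroExt.inr ((2:ℝ)⁻¹ • (gLd d * (ib d q * z - z * ib d b)))
    ↔ (y = z ∧ ib d (q - p) * y = y * ib d (b - a)) := by
  have hrel : ∀ y : Cl (d+1), (ib d (q - p) * y = y * ib d (b - a)
      ↔ ib d p * y - y * ib d a = ib d q * y - y * ib d b) := by
    intro y
    rw [ib_sub, ib_sub, sub_mul, mul_sub]
    exact sub_swap_iff.symm
  constructor
  · intro h
    have hfst := congrArg TrivSqZeroExt.fst h
    simp only [TrivSqZeroExt.fst_add, TrivSqZeroExt.fst_inl, TrivSqZeroExt.fst_inr,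
      add_zero] at hfst
    subst hfst
    refine ⟨rfl, ?_⟩
    have hsnd := congrArg TrivSqZeroExt.snd h
    simp only [TrivSqZeroExt.snd_add, TrivSqZeroExt.snd_inl, TrivSqZeroExt.snd_inr,
      zero_add] at hsnd
    have h2 := smul_right_injective (Cl (d+1)) (by norm_num : (2:ℝ)⁻¹ ≠ 0) hsnd
    exact (hrel y).mpr (cancel_gL h2)
  · rintro ⟨rfl, h⟩
    have h2 := (hrel y).mp h
    rw [h2]

end Bridge2
open CliffordAlgebra Aux Aux2 Aux3 Aux4 Bridge Bridge2 in
/-- Let `a, p, b, q ∈ ℝ^d` with `F_{ap} ≠ F_{bq}` and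
`F_{ap} ∩ F_{bq} ≠ {0}`. Then
`F_{ap} ∩ F_{bq} = (1 + ½e_{d+1}e_{d+2}i(p))·β·Cl_{d−1}^0·α·(1 − ½e_{d+1}e_{d+2}i(a))`
for any `α, β ∈ Spin(d)` satisfying `α·(i(b−a)/‖b−a‖)·α⁻¹ = e_d` and
`β·e_d·β⁻¹ = i(q−p)/‖q−p‖` (Euclidean norms). -/
theorem F_inter_characterization (d : ℕ) (hd : 2 ≤ d) (a p b q : Fin d → ℝ)
    (hne : X.F d a p ≠ X.F d b q) (hint : X.F d a p ∩ X.F d b q ≠ {0})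
    (al be : Xa d) (hal : al ∈ X.Spin d d) (hbe : be ∈ X.Spin d d)
    (hal2 : al * X.iMap d ((Real.sqrt (∑ j, (b j - a j) ^ 2))⁻¹ • (b - a)) * X.conj d al
        = X.e d ⟨d - 1, by omega⟩)
    (hbe2 : be * X.e d ⟨d - 1, by omega⟩ * X.conj d be
        = X.iMap d ((Real.sqrt (∑ j, (q j - p j) ^ 2))⁻¹ • (q - p))) :
    X.F d a p ∩ X.F d b q =
      (fun c => (1 + (2 : ℝ)⁻¹ • (X.eL d * X.eps d * X.iMap d p)) * (be * c * al) *
          (1 - (2 : ℝ)⁻¹ • (X.eL d * X.eps d * X.iMap d a))) ''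
        (X.ClE d (d - 1) : Set (Xa d)) := by
  classical
  set δ : Fin (d+1) := ⟨d - 1, by omega⟩ with hδdef
  set nb : ℝ := Real.sqrt (∑ j, (b j - a j) ^ 2) with hnb
  set nq : ℝ := Real.sqrt (∑ j, (q j - p j) ^ 2) with hnq
  -- unpack Spin memberships
  obtain ⟨halE, halN, -⟩ := hal
  obtain ⟨hbeE, hbeN, -⟩ := hbe
  rw [ClE_eq] at halE hbeE
  obtain ⟨al₀, hal₀, rfl⟩ := Submodule.mem_map.mp halE
  obtain ⟨be₀, hbe₀, rfl⟩ := Submodule.mem_map.mp hbeE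
  set al' : Cl (d+1) := conjC (d+1) al₀ with hal'def
  set be' : Cl (d+1) := conjC (d+1) be₀ with hbe'def
  -- norms of the spinors
  have halinv : al₀ * al' = 1 := by
    have h1 : TrivSqZeroExt.inl (al₀ * al') = (TrivSqZeroExt.inl 1 : Xa d) := by
      rw [← TrivSqZeroExt.inl_mul_inl, ← conj_inl]
      rw [TrivSqZeroExt.inl_one]
      exact halN
    exact TrivSqZeroExt.inl_injective h1
  have hbeinv : be₀ * be' = 1 := by
    have h1 : TrivSqZeroExt.inl (be₀ * be') = (TrivSqZeroExt.inl 1 : Xa d) := by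
      rw [← TrivSqZeroExt.inl_mul_inl, ← conj_inl]
      rw [TrivSqZeroExt.inl_one]
      exact hbeN
    exact TrivSqZeroExt.inl_injective h1
  have halinv' : al' * al₀ = 1 := mul_eq_one_symm halinv
  have hbeinv' : be' * be₀ = 1 := mul_eq_one_symm hbeinv
  -- membership of the conjugates
  have hal'mem : al' ∈ gspan (uset d d) 0 := conjC_mem_gspan hal₀
  have hbe'mem : be' ∈ gspan (uset d d) 0 := conjC_mem_gspan hbe₀
  -- the Clifford-level versions of the algebraic hypotheses
  have halC : al₀ * ((nb : ℝ)⁻¹ • ib d (b - a)) * al' = gC (d+1) δ := by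
    have h1 : TrivSqZeroExt.inl (al₀ * ib d ((nb:ℝ)⁻¹ • (b - a)) * al')
        = (TrivSqZeroExt.inl (gC (d+1) δ) : Xa d) := by
      rw [← TrivSqZeroExt.inl_mul_inl, ← TrivSqZeroExt.inl_mul_inl, ← conj_inl, ← iMap_eq]
      exact hal2
    have h2 := TrivSqZeroExt.inl_injective h1
    rwa [ib_smul] at h2
  have hbeC : be₀ * gC (d+1) δ * be' = (nq : ℝ)⁻¹ • ib d (q - p) := by
    have h1 : TrivSqZeroExt.inl (be₀ * gC (d+1) δ * be')
        = (TrivSqZeroExt.inl (ib d ((nq:ℝ)⁻¹ • (q - p))) : Xa d) := by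
      rw [← TrivSqZeroExt.inl_mul_inl, ← TrivSqZeroExt.inl_mul_inl, ← conj_inl, ← iMap_eq]
      exact hbe2
    have h2 := TrivSqZeroExt.inl_injective h1
    rwa [ib_smul] at h2
  -- extraction of the common canonical form
  have extract : ∀ x : Xa d, x ∈ X.F d a p → x ∈ X.F d b q →
      ∃ y ∈ gspan (uset d d) 0,
        x = TrivSqZeroExt.inl y +
          TrivSqZeroExt.inr ((2:ℝ)⁻¹ • (gLd d * (ib d p * y - y * ib d a))) ∧
        ib d (q - p) * y = y * ib d (b - a) := by
    intro x hxa hxb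
    obtain ⟨y, hy, hxy⟩ := (F_iff a p x).mp hxa
    obtain ⟨z, hz, hxz⟩ := (F_iff b q x).mp hxb
    have heq := (canon_eq_iff p a q b).mp (hxy.symm.trans hxz)
    exact ⟨y, hy, hxy, heq.1 ▸ heq.2⟩
  -- a nonzero element of the intersection
  have h0 : ∃ x ∈ X.F d a p ∩ X.F d b q, x ≠ 0 := by
    by_contra hcon
    push_neg at hcon
    apply hint
    ext x
    constructor
    · intro hx
      exact hcon x hx
    · intro hx
      rw [Set.mem_singleton_iff] at hx
      subst hx
      exact ⟨zero_mem_F a p, zero_mem_F b q⟩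
  obtain ⟨x₀, hx₀, hx₀ne⟩ := h0
  obtain ⟨y₀, hy₀mem, hx₀eq, hrel₀⟩ := extract x₀ hx₀.1 hx₀.2
  have hy₀ne : y₀ ≠ 0 := by
    rintro rfl
    exact hx₀ne (hx₀eq.trans (canon_zero p a))
  have ib_zero : ib d 0 = 0 := by
    rw [ib, show extd d (0 : Fin d → ℝ) = 0 from funext fun j => by
      by_cases h : (j:ℕ) < d <;> simp [extd, h], map_zero]
  -- a ≠ b
  have hab : a ≠ b := by
    rintro rfl
    by_cases hpq : p = q
    · subst hpq; exact hne rfl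
    · rw [sub_self, ib_zero, mul_zero] at hrel₀
      refine hy₀ne (iota_mul_cancel_left (extd_ne_zero ?_) hrel₀)
      exact sub_ne_zero.mpr (Ne.symm hpq)
  have hpq : p ≠ q := by
    rintro rfl
    rw [sub_self, ib_zero, zero_mul] at hrel₀
    refine hy₀ne (iota_mul_cancel_right (extd_ne_zero ?_) hrel₀.symm)
    exact sub_ne_zero.mpr (Ne.symm hab)
  -- positivity of the norms
  have hsumb : 0 < ∑ j, (b j - a j) ^ 2 := by
    have h1 : (b - a) ≠ 0 := sub_ne_zero.mpr (Ne.symm hab)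
    have h2 := sum_sq_pos h1
    calc (0:ℝ) < ∑ j, (b - a) j * (b - a) j := h2
    _ = ∑ j, (b j - a j) ^ 2 := by
        apply Finset.sum_congr rfl; intro j _; rw [Pi.sub_apply]; ring
  have hsumq : 0 < ∑ j, (q j - p j) ^ 2 := by
    have h1 : (q - p) ≠ 0 := sub_ne_zero.mpr (Ne.symm hpq)
    have h2 := sum_sq_pos h1
    calc (0:ℝ) < ∑ j, (q - p) j * (q - p) j := h2
    _ = ∑ j, (q j - p j) ^ 2 := by
        apply Finset.sum_congr rfl; intro j _; rw [Pi.sub_apply]; ring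
  have hnbpos : 0 < nb := Real.sqrt_pos.mpr hsumb
  have hnqpos : 0 < nq := Real.sqrt_pos.mpr hsumq
  -- solve the conjugation relations for the embedded vectors
  have hba : ib d (b - a) = nb • (al' * gC (d+1) δ * al₀) := by
    have e : al' * (al₀ * ((nb:ℝ)⁻¹ • ib d (b-a)) * al') * al₀ = (nb:ℝ)⁻¹ • ib d (b-a) := by
      have h1 : al' * (al₀ * ((nb:ℝ)⁻¹ • ib d (b-a)) * al') * al₀
          = (al' * al₀) * ((nb:ℝ)⁻¹ • ib d (b-a)) * (al' * al₀) := by noncomm_ring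
      rw [h1, halinv', one_mul, mul_one]
    have h5 : al' * gC (d+1) δ * al₀ = (nb:ℝ)⁻¹ • ib d (b - a) := by
      rw [← halC]
      exact e
    rw [h5, smul_smul, mul_inv_cancel₀ (ne_of_gt hnbpos), one_smul]
  have hqp : ib d (q - p) = nq • (be₀ * gC (d+1) δ * be') := by
    rw [hbeC, smul_smul, mul_inv_cancel₀ (ne_of_gt hnqpos), one_smul]
  -- reconstruction
  have recon : ∀ y : Cl (d+1), be₀ * (be' * y * al') * al₀ = y := by
    intro y
    have h1 : be₀ * (be' * y * al') * al₀ = (be₀ * be') * y * (al' * al₀) := by noncomm_ring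
    rw [h1, hbeinv, halinv', one_mul, mul_one]
  -- the conjugated commutation relation
  have transform : ∀ y : Cl (d+1), ib d (q - p) * y = y * ib d (b - a) →
      nq • (gC (d+1) δ * (be' * y * al')) = nb • ((be' * y * al') * gC (d+1) δ) := by
    intro y hy
    rw [hqp, hba, smul_mul_assoc, mul_smul_comm] at hy
    have h2 := congrArg (fun t => be' * t * al') hy
    simp only [mul_smul_comm, smul_mul_assoc] at h2
    have e1 : be' * (be₀ * gC (d+1) δ * be' * y) * al' = gC (d+1) δ * (be' * y * al') := by
      have h3 : be' * (be₀ * gC (d+1) δ * be' * y) * al'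
          = (be' * be₀) * (gC (d+1) δ * (be' * y * al')) := by noncomm_ring
      rw [h3, hbeinv', one_mul]
    have e2 : be' * (y * (al' * gC (d+1) δ * al₀)) * al' = (be' * y * al') * gC (d+1) δ := by
      have h3 : be' * (y * (al' * gC (d+1) δ * al₀)) * al'
          = ((be' * y * al') * gC (d+1) δ) * (al₀ * al') := by noncomm_ring
      rw [h3, halinv, mul_one]
    rw [e1, e2] at h2
    exact h2
  -- membership of the conjugated element
  have cmem : ∀ y ∈ gspan (uset d d) 0, be' * y * al' ∈ gspan (uset d d) 0 := by
    intro y hy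
    have h1 := gspan_mul_gspan hbe'mem hy
    rw [Finset.union_self] at h1
    have h2 := gspan_mul_gspan h1 hal'mem
    rw [Finset.union_self] at h2
    rwa [gspan_parity (show ((0+0)+0) % 2 = 0 % 2 by norm_num)] at h2
  -- equality of the norms
  have hnbq : nb = nq := by
    by_contra hnbq
    have hsc := transform y₀ hrel₀
    have hc0 := scaled_comm_eq_zero hnqpos hnbpos (fun h => hnbq h.symm) hsc
    have : y₀ = 0 := by
      rw [← recon y₀, hc0, mul_zero, zero_mul]
    exact hy₀ne this
  -- index set facts
  have hδval : (δ : ℕ) = d - 1 := rfl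
  have hδnotmem : δ ∉ uset d (d-1) := by
    rw [mem_uset, hδval]
    omega
  have hδmax : ∀ k ∈ uset d (d-1), k < δ := by
    intro k hk
    rw [mem_uset] at hk
    rw [Fin.lt_def, hδval]
    omega
  have husplit : insert δ (uset d (d-1)) = uset d d := by
    ext j
    rw [Finset.mem_insert, mem_uset, mem_uset]
    constructor
    · rintro (rfl | h)
      · rw [hδval]; omega
      · omega
    · intro h
      by_cases hj : (j : ℕ) = d - 1
      · left; exact Fin.ext (by rw [hδval, hj])
      · right; omega
  have husub : uset d (d-1) ⊆ uset d d := by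
    intro j hj
    rw [mem_uset] at hj ⊢
    omega
  -- the main set equality
  ext x
  simp only [Set.mem_inter_iff, Set.mem_image]
  constructor
  · rintro ⟨hxa, hxb⟩
    obtain ⟨y, hy, hxeq, hrel⟩ := extract x hxa hxb
    set c : Cl (d+1) := be' * y * al' with hcdef
    have hc : c ∈ gspan (uset d d) 0 := cmem y hy
    have hsc := transform y hrel
    rw [hnbq] at hsc
    have hcomm : gC (d+1) δ * c = c * gC (d+1) δ :=
      smul_right_injective (Cl (d+1)) (ne_of_gt hnqpos) hsc
    have hc' : c ∈ gspan (uset d (d-1)) 0 := by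
      refine comm_mem_erase hδnotmem hδmax ?_ hcomm
      rwa [husplit]
    refine ⟨TrivSqZeroExt.inl c, ?_, ?_⟩
    · rw [SetLike.mem_coe, ClE_eq]
      exact Submodule.mem_map.mpr ⟨c, hc', rfl⟩
    · have hbc : (TrivSqZeroExt.inl be₀ : Xa d) * TrivSqZeroExt.inl c * TrivSqZeroExt.inl al₀
          = TrivSqZeroExt.inl y := by
        rw [TrivSqZeroExt.inl_mul_inl, TrivSqZeroExt.inl_mul_inl, recon y]
      show (1 + (2:ℝ)⁻¹ • (X.eL d * X.eps d * X.iMap d p)) *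
          ((inlL d be₀) * TrivSqZeroExt.inl c * (inlL d al₀)) *
          (1 - (2:ℝ)⁻¹ • (X.eL d * X.eps d * X.iMap d a)) = x
      rw [inlL_apply, inlL_apply, hbc, form p a y (commL hy)]
      exact hxeq.symm
  · rintro ⟨cx, hcx, rfl⟩
    rw [SetLike.mem_coe, ClE_eq] at hcx
    obtain ⟨c, hc, rfl⟩ := Submodule.mem_map.mp hcx
    set y : Cl (d+1) := be₀ * c * al₀ with hydef
    have hymem : y ∈ gspan (uset d d) 0 := by
      have h1 := gspan_mul_gspan hbe₀ (gspan_mono husub hc)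
      rw [Finset.union_self] at h1
      have h2 := gspan_mul_gspan h1 hal₀
      rw [Finset.union_self] at h2
      rwa [gspan_parity (show ((0+0)+0) % 2 = 0 % 2 by norm_num)] at h2
    have hcomm : gC (d+1) δ * c = c * gC (d+1) δ := gC_comm_even hδnotmem hc
    have hbc : (inlL d be₀) * (inlL d c) * (inlL d al₀) = TrivSqZeroExt.inl y := by
      rw [inlL_apply, inlL_apply, inlL_apply, TrivSqZeroExt.inl_mul_inl,
        TrivSqZeroExt.inl_mul_inl]
    have hrel : ib d (q - p) * y = y * ib d (b - a) := by
      rw [hqp, hba, ← hnbq, smul_mul_assoc, mul_smul_comm]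
      congr 1
      have e1 : be₀ * gC (d+1) δ * be' * y = be₀ * (gC (d+1) δ * c) * al₀ := by
        have h3 : be₀ * gC (d+1) δ * be' * y
            = be₀ * gC (d+1) δ * ((be' * be₀) * (c * al₀)) := by
          rw [hydef]; noncomm_ring
        rw [h3, hbeinv', one_mul]
        noncomm_ring
      have e2 : y * (al' * gC (d+1) δ * al₀) = be₀ * (c * gC (d+1) δ) * al₀ := by
        have h3 : y * (al' * gC (d+1) δ * al₀)
            = (be₀ * c) * ((al₀ * al') * (gC (d+1) δ * al₀)) := by
          rw [hydef]; noncomm_ring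
        rw [h3, halinv, one_mul]
        noncomm_ring
      rw [e1, e2, hcomm]
    constructor
    · rw [F_iff]
      refine ⟨y, hymem, ?_⟩
      rw [hbc, form p a y (commL hymem)]
    · rw [F_iff]
      refine ⟨y, hymem, ?_⟩
      rw [hbc, form p a y (commL hymem)]
      exact (canon_eq_iff p a q b).mpr ⟨rfl, hrel⟩
end
end

section
/- For a fixed even m ≥ 0, let z ∈ Z_d^0 \ {0} consist entirely of m-terms and let a, p ∈ ℝ^d. Then (1 + ½e_{d+1}e_{d+2}i(p))·z·(1 − ½e_{d+1}e_{d+2}i(a)) lies in the span of the m-terms and (m+2)-terms of Z_d^0, and its m-term component is nonzero. -/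
noncomputable section

open CliffordAlgebra

namespace Model

abbrev V (n : ℕ) := Finset (Fin n) → ℝ

def tog {n : ℕ} (j : Fin n) (S : Finset (Fin n)) : Finset (Fin n) :=
  if j ∈ S then S.erase j else insert j S

def sg {n : ℕ} (j : Fin n) (S : Finset (Fin n)) : ℝ :=
  (-1 : ℝ) ^ (S.filter (· < j)).card * (if j ∈ S then 1 else -1)

variable {n : ℕ}

lemma mem_tog_self (j : Fin n) (S : Finset (Fin n)) : j ∈ tog j S ↔ j ∉ S := by
  unfold tog; by_cases h : j ∈ S <;> simp [h]

lemma mem_tog_ne {j k : Fin n} (h : j ≠ k) (S : Finset (Fin n)) :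
    j ∈ tog k S ↔ j ∈ S := by
  unfold tog; by_cases hk : k ∈ S <;> simp [hk, Finset.mem_erase, Finset.mem_insert, h, h.symm]

lemma tog_tog_self (j : Fin n) (S : Finset (Fin n)) : tog j (tog j S) = S := by
  unfold tog
  by_cases h : j ∈ S
  · simp [h, Finset.insert_erase]
  · simp [h, Finset.erase_insert]

lemma mem_tog {x a : Fin n} (S : Finset (Fin n)) :
    x ∈ tog a S ↔ ((x = a ∧ a ∉ S) ∨ (x ≠ a ∧ x ∈ S)) := by
  by_cases hxa : x = a
  · subst hxa; simp [mem_tog_self]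
  · simp [mem_tog_ne hxa, hxa]

lemma tog_comm {j k : Fin n} (h : j ≠ k) (S : Finset (Fin n)) :
    tog j (tog k S) = tog k (tog j S) := by
  ext x
  rcases eq_or_ne x j with rfl | hxj
  · simp [mem_tog_self, mem_tog_ne h, mem_tog_ne (Ne.symm h)]
  · rcases eq_or_ne x k with rfl | hxk
    · simp [mem_tog_self, mem_tog_ne h, mem_tog_ne (Ne.symm h)]
    · simp [mem_tog_ne hxj, mem_tog_ne hxk]

lemma filter_tog_lt {j k : Fin n} (h : j < k) (S : Finset (Fin n)) :
    (tog j S).filter (· < k) = tog j (S.filter (· < k)) := by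
  unfold tog
  by_cases hj : j ∈ S
  · rw [if_pos hj, if_pos (by simp [Finset.mem_filter, hj, h]), Finset.filter_erase]
  · rw [if_neg hj, if_neg (by simp [Finset.mem_filter, hj]), Finset.filter_insert, if_pos h]

lemma filter_tog_ge {j k : Fin n} (h : ¬ j < k) (S : Finset (Fin n)) :
    (tog j S).filter (· < k) = S.filter (· < k) := by
  unfold tog
  by_cases hj : j ∈ S
  · rw [if_pos hj, Finset.filter_erase, Finset.erase_eq_of_notMem]
    simp [Finset.mem_filter, h]
  · rw [if_neg hj, Finset.filter_insert, if_neg h]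

lemma neg_one_pow_tog (j : Fin n) (T : Finset (Fin n)) :
    (-1 : ℝ) ^ (tog j T).card = -(-1 : ℝ) ^ T.card := by
  unfold tog
  by_cases h : j ∈ T
  · rw [if_pos h, ← Finset.card_erase_add_one h, pow_succ]; ring
  · rw [if_neg h, Finset.card_insert_of_notMem h, pow_succ]; ring

lemma sg_tog_self (j : Fin n) (S : Finset (Fin n)) : sg j S * sg j (tog j S) = -1 := by
  unfold sg
  rw [filter_tog_ge (lt_irrefl j) S]
  set c := (-1 : ℝ) ^ (S.filter (· < j)).card with hc
  have hcc : c * c = 1 := by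
    rw [hc, ← pow_add, ← two_mul, pow_mul, neg_one_sq, one_pow]
  by_cases h : j ∈ S
  · rw [if_pos h, if_neg (by simp [mem_tog_self, h])]
    linear_combination -hcc
  · rw [if_neg h, if_pos (by simp [mem_tog_self, h])]
    linear_combination -hcc

lemma sg_tog_ne {j k : Fin n} (h : j ≠ k) (S : Finset (Fin n)) :
    sg k (tog j S) = (if j < k then -1 else 1) * sg k S := by
  unfold sg
  simp only [mem_tog_ne (Ne.symm h)]
  by_cases hlt : j < k
  · rw [if_pos hlt, filter_tog_lt hlt, neg_one_pow_tog]; ring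
  · rw [if_neg hlt, filter_tog_ge hlt]; ring

lemma sg_swap {j k : Fin n} (h : j ≠ k) (S : Finset (Fin n)) :
    sg j S * sg k (tog j S) = -(sg k S * sg j (tog k S)) := by
  rw [sg_tog_ne h, sg_tog_ne (Ne.symm h)]
  rcases lt_or_gt_of_ne h with hlt | hgt
  · rw [if_pos hlt, if_neg (not_lt.2 hlt.le)]; ring
  · rw [if_neg (not_lt.2 hgt.le), if_pos hgt]; ring

end Model

namespace Model2
open Model

variable {n : ℕ}

/-- The action of a vector on `V n`. -/
def act (v : Fin n → ℝ) : Module.End ℝ (V n) where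
  toFun x := fun S => ∑ j, v j * (sg j S * x (tog j S))
  map_add' x y := by
    funext S
    simp [Pi.add_apply, mul_add, Finset.sum_add_distrib]
  map_smul' c x := by
    funext S
    simp only [Pi.smul_apply, smul_eq_mul, RingHom.id_apply, Finset.mul_sum]
    exact Finset.sum_congr rfl fun j _ => by ring

lemma act_apply (v : Fin n → ℝ) (x : V n) (S : Finset (Fin n)) :
    act v x S = ∑ j, v j * (sg j S * x (tog j S)) := rfl

def actL : (Fin n → ℝ) →ₗ[ℝ] Module.End ℝ (V n) where
  toFun := act
  map_add' v w := by
    refine LinearMap.ext fun x => funext fun S => ?_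
    show act _ x S = act v x S + act w x S
    simp only [act_apply, Pi.add_apply, add_mul, Finset.sum_add_distrib]
  map_smul' c v := by
    refine LinearMap.ext fun x => funext fun S => ?_
    show act _ x S = (c • act v) x S
    simp only [act_apply, LinearMap.smul_apply, Pi.smul_apply, smul_eq_mul, Pi.smul_apply,
      Finset.mul_sum]
    exact Finset.sum_congr rfl fun j _ => by ring

lemma act_sq (v : Fin n → ℝ) : act (n := n) v * act v = algebraMap ℝ _ (Qn n v) := by
  refine LinearMap.ext fun x => funext fun S => ?_
  rw [Module.End.mul_apply, Module.algebraMap_end_apply]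
  show act v (act v x) S = (Qn n v • x) S
  rw [Pi.smul_apply, smul_eq_mul]
  rw [act_apply]
  have hterm : ∀ j : Fin n, v j * (sg j S * act v x (tog j S)) =
      ∑ k, (v j * v k) * ((sg j S * sg k (tog j S)) * x (tog k (tog j S))) := by
    intro j
    rw [act_apply, Finset.mul_sum, Finset.mul_sum]
    refine Finset.sum_congr rfl fun k _ => by ring
  rw [Finset.sum_congr rfl fun j _ => hterm j]
  set T : Fin n → Fin n → ℝ := fun j k =>
    (v j * v k) * ((sg j S * sg k (tog j S)) * x (tog k (tog j S))) with hT
  have hanti : ∀ j k, T j k + T k j = if k = j then 2 * T j j else 0 := by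
    intro j k
    rcases eq_or_ne k j with rfl | hkj
    · rw [if_pos rfl]; ring
    · rw [if_neg hkj]
      have h1 := sg_swap (j := j) (k := k) (Ne.symm hkj) S
      simp only [hT]
      rw [tog_comm (Ne.symm hkj) S]
      linear_combination (v j * v k * x (tog k (tog j S))) * h1
  have h2 : (∑ j, ∑ k, T j k) + (∑ j, ∑ k, T j k) = ∑ j, 2 * T j j := by
    nth_rewrite 2 [Finset.sum_comm]
    rw [← Finset.sum_add_distrib]
    refine Finset.sum_congr rfl fun j _ => ?_
    rw [← Finset.sum_add_distrib, Finset.sum_congr rfl fun k _ => hanti j k]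
    simp
  have h3 : ∑ j, ∑ k, T j k = ∑ j, T j j := by
    have hs : ∑ j, 2 * T j j = 2 * ∑ j, T j j := by rw [Finset.mul_sum]
    rw [hs] at h2; linarith
  rw [h3]
  have h4 : ∀ j, T j j = -(v j * v j) * x S := by
    intro j
    have h5 := sg_tog_self j S
    simp only [hT]
    rw [tog_tog_self]
    linear_combination (v j * v j * x S) * h5
  rw [Finset.sum_congr rfl fun j _ => h4 j]
  show _ = Qn n v * x S
  rw [Qn, QuadraticMap.weightedSumSquares_apply, Finset.sum_mul]
  refine Finset.sum_congr rfl fun j _ => by rw [smul_eq_mul]; ring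

/-- The representation of `Cl n` on `V n`. -/
def repC (n : ℕ) : Cl n →ₐ[ℝ] Module.End ℝ (V n) :=
  CliffordAlgebra.lift (Qn n) ⟨actL, act_sq⟩

lemma repC_ι (v : Fin n → ℝ) : repC n (CliffordAlgebra.ι (Qn n) v) = act v :=
  CliffordAlgebra.lift_ι_apply _ _ _

/-- delta function -/
def dl (S : Finset (Fin n)) : V n := fun T => if T = S then 1 else 0

lemma repC_g (j : Fin n) (U : Finset (Fin n)) (hjU : ∀ x ∈ U, j < x) :
    repC n (gC n j) (dl U) = dl (insert j U) := by
  have hjU' : j ∉ U := fun h => lt_irrefl j (hjU j h)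
  rw [gC, repC_ι]
  funext S
  rw [act_apply]
  rw [Finset.sum_eq_single j]
  · rw [Pi.single_eq_same, dl, dl]
    by_cases hS : S = insert j U
    · subst hS
      rw [if_pos rfl]
      have htog : tog j (insert j U) = U := by
        rw [tog, if_pos (Finset.mem_insert_self j U), Finset.erase_insert hjU']
      rw [htog, if_pos rfl, sg]
      have hfil : (insert j U).filter (· < j) = ∅ := by
        refine Finset.filter_eq_empty_iff.2 fun x hx => ?_
        rcases Finset.mem_insert.1 hx with rfl | hx
        · exact lt_irrefl x
        · exact not_lt.2 (hjU x hx).le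
      rw [hfil, Finset.card_empty, pow_zero, if_pos (Finset.mem_insert_self j U)]
      norm_num
    · rw [if_neg hS]
      have : tog j S ≠ U := by
        intro hE
        apply hS
        rw [tog] at hE
        by_cases hj : j ∈ S
        · rw [if_pos hj] at hE
          rw [← hE, Finset.insert_erase hj]
        · rw [if_neg hj] at hE
          exact absurd (hE ▸ Finset.mem_insert_self j S) hjU'
      rw [if_neg this]
      ring
  · intro k _ hk
    rw [Pi.single_eq_of_ne hk]
    ring
  · intro h
    exact absurd (Finset.mem_univ j) h

end Model2

section CliffLemmas
variable {n : ℕ}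

lemma Qn_apply (v : Fin n → ℝ) : Qn n v = ∑ i, -(v i * v i) := by
  rw [Qn, QuadraticMap.weightedSumSquares_apply]
  exact Finset.sum_congr rfl fun i _ => by rw [smul_eq_mul]; ring

lemma Qn_single (j : Fin n) : Qn n (Pi.single j 1) = -1 := by
  rw [Qn_apply, Finset.sum_eq_single j]
  · simp
  · intro k _ hk; rw [Pi.single_eq_of_ne hk]; ring
  · intro h; exact absurd (Finset.mem_univ j) h

lemma gsq (j : Fin n) : gC n j * gC n j = -1 := by
  rw [gC, CliffordAlgebra.ι_sq_scalar, Qn_single, map_neg, map_one]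

lemma ganti {j k : Fin n} (h : j ≠ k) : gC n j * gC n k = -(gC n k * gC n j) := by
  have horth : (Qn n).IsOrtho (Pi.single j 1) (Pi.single k 1) := by
    rw [QuadraticMap.isOrtho_def, Qn_apply, Qn_apply, Qn_apply]
    rw [← Finset.sum_add_distrib]
    refine Finset.sum_congr rfl fun i _ => ?_
    rcases eq_or_ne i j with rfl | hij
    · rw [Pi.add_apply, Pi.single_eq_same, Pi.single_eq_of_ne h]; ring
    · rcases eq_or_ne i k with rfl | hik
      · rw [Pi.add_apply, Pi.single_eq_same, Pi.single_eq_of_ne hij]; ring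
      · rw [Pi.add_apply, Pi.single_eq_of_ne hij, Pi.single_eq_of_ne hik]; ring
  have h2 := CliffordAlgebra.ι_mul_ι_add_swap_of_isOrtho horth
  rw [gC, gC]
  exact eq_neg_of_add_eq_zero_left h2

/-- Product of a list of generators. -/
def gl (n : ℕ) (l : List (Fin n)) : Cl n := (l.map (gC n)).prod

lemma sprodC_eq_gl (s : Finset (Fin n)) : sprodC n s = gl n (s.sort (· ≤ ·)) := rfl

@[simp] lemma gl_nil : gl n ([] : List (Fin n)) = 1 := rfl

lemma gl_cons (b : Fin n) (t : List (Fin n)) : gl n (b :: t) = gC n b * gl n t := by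
  rw [gl, gl, List.map_cons, List.prod_cons]

/-- commuting a generator from the right to the left through a list avoiding it -/
lemma gl_mul_g {l : List (Fin n)} {j : Fin n} (h : j ∉ l) :
    gl n l * gC n j = ((-1 : ℝ) ^ l.length) • (gC n j * gl n l) := by
  induction l with
  | nil => simp [gl]
  | cons b t ih =>
    have hjb : j ≠ b := fun hE => h (hE ▸ List.mem_cons_self)
    have hjt : j ∉ t := fun hE => h (List.mem_cons_of_mem b hE)
    rw [gl_cons, mul_assoc, ih hjt, mul_smul_comm, ← mul_assoc, ganti (Ne.symm hjb),
      neg_mul, mul_assoc, smul_neg, List.length_cons, pow_succ, mul_smul, neg_one_smul,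
      smul_neg]

lemma sort_toFinset_eq {l : List (Fin n)} (hl : l.Pairwise (· < ·)) :
    l.toFinset.sort (· ≤ ·) = l := by
  induction l with
  | nil => simp
  | cons b t ih =>
    rw [List.pairwise_cons] at hl
    have hbt : b ∉ t.toFinset := by
      rw [List.mem_toFinset]
      exact fun h => lt_irrefl b (hl.1 b h)
    rw [List.toFinset_cons, Finset.sort_insert (· ≤ ·) (fun x hx => (hl.1 x (List.mem_toFinset.1 hx)).le) hbt,
      ih hl.2]

lemma sprodC_toFinset {l : List (Fin n)} (hl : l.Pairwise (· < ·)) :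
    sprodC n l.toFinset = gl n l := by
  rw [sprodC_eq_gl, sort_toFinset_eq hl]

/-- K1: left multiplication by a fresh generator. -/
lemma K1 : ∀ (l : List (Fin n)), l.Pairwise (· < ·) → ∀ j ∉ l,
    ∃ r : ℝ, gC n j * gl n l = r • sprodC n (insert j l.toFinset) := by
  intro l
  induction l with
  | nil =>
    intro _ j _
    refine ⟨1, ?_⟩
    simp [gl, sprodC, Finset.sort_singleton]
  | cons b t ih =>
    intro hsort j hj
    rw [List.pairwise_cons] at hsort
    have hjb : j ≠ b := fun hE => hj (hE ▸ List.mem_cons_self)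
    have hjt : j ∉ t := fun hE => hj (List.mem_cons_of_mem b hE)
    have hbt : b ∉ t.toFinset := fun h => lt_irrefl b (hsort.1 b (List.mem_toFinset.1 h))
    rcases lt_or_gt_of_ne hjb with hlt | hgt
    · -- j < b : the product is already sorted
      refine ⟨1, ?_⟩
      have hjtF : j ∉ (b :: t).toFinset := by rwa [List.mem_toFinset]
      have : ∀ x ∈ (b :: t).toFinset, j ≤ x := by
        intro x hx
        rcases List.mem_toFinset.1 hx with h
        rcases List.mem_cons.1 h with rfl | hxt
        · exact hlt.le
        · exact (hlt.trans (hsort.1 x hxt)).le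
      rw [one_smul, sprodC_eq_gl, Finset.sort_insert (· ≤ ·) this hjtF, gl_cons,
        sort_toFinset_eq (l := b :: t) (by rw [List.pairwise_cons]; exact hsort), gl_cons, gl_cons]
    · -- b < j : recurse
      obtain ⟨r, hr⟩ := ih hsort.2 j hjt
      refine ⟨-r, ?_⟩
      rw [gl_cons, ← mul_assoc, ganti hjb, neg_mul, mul_assoc, hr, mul_smul_comm, ← neg_smul]
      congr 1
      have hsort' : (insert j t.toFinset).sort (· ≤ ·) |>.Pairwise (· < ·) := (Finset.sortedLT_sort _).pairwise
      have hblt : ∀ x ∈ insert j t.toFinset, b < x := by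
        intro x hx
        rcases Finset.mem_insert.1 hx with rfl | hx
        · exact hgt
        · exact hsort.1 x (List.mem_toFinset.1 hx)
      have hbmem : b ∉ insert j t.toFinset := fun h => lt_irrefl b (hblt b h)
      rw [sprodC_eq_gl, sprodC_eq_gl,
        show (insert j ((b :: t).toFinset) : Finset (Fin n)) = insert b (insert j t.toFinset) by
          rw [List.toFinset_cons, Finset.insert_comm],
        Finset.sort_insert (· ≤ ·) (fun x hx => (hblt x hx).le) hbmem, gl_cons]
  
/-- K2: left multiplication by a present generator. -/
lemma K2 : ∀ (l : List (Fin n)), l.Pairwise (· < ·) → ∀ j ∈ l,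
    ∃ r : ℝ, gC n j * gl n l = r • sprodC n (l.toFinset.erase j) := by
  intro l
  induction l with
  | nil => intro _ j hj; exact absurd hj (List.not_mem_nil)
  | cons b t ih =>
    intro hsort j hj
    rw [List.pairwise_cons] at hsort
    have hbt : b ∉ t.toFinset := fun h => lt_irrefl b (hsort.1 b (List.mem_toFinset.1 h))
    rcases eq_or_ne j b with rfl | hjb
    · refine ⟨-1, ?_⟩
      rw [gl_cons, ← mul_assoc, gsq, List.toFinset_cons, Finset.erase_insert hbt,
        sprodC_toFinset hsort.2]
      simp
    · have hjt : j ∈ t := (List.mem_cons.1 hj).resolve_left hjb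
      obtain ⟨r, hr⟩ := ih hsort.2 j hjt
      refine ⟨-r, ?_⟩
      rw [gl_cons, ← mul_assoc, ganti hjb, neg_mul, mul_assoc, hr, mul_smul_comm, ← neg_smul]
      congr 1
      have hblt : ∀ x ∈ t.toFinset.erase j, b < x := by
        intro x hx
        exact hsort.1 x (List.mem_toFinset.1 (Finset.mem_of_mem_erase hx))
      have hbmem : b ∉ t.toFinset.erase j := fun h => lt_irrefl b (hblt b h)
      rw [sprodC_eq_gl, sprodC_eq_gl,
        show ((b :: t).toFinset.erase j : Finset (Fin n)) = insert b (t.toFinset.erase j) by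
          rw [List.toFinset_cons, Finset.erase_insert_of_ne (Ne.symm hjb)],
        Finset.sort_insert (· ≤ ·) (fun x hx => (hblt x hx).le) hbmem, gl_cons]

/-- K: left multiplication by any generator, Finset version. -/
lemma gK (s : Finset (Fin n)) (j : Fin n) :
    ∃ r : ℝ, gC n j * sprodC n s = r • sprodC n (Model.tog j s) := by
  have hsort := (Finset.sortedLT_sort s).pairwise
  have htf : (s.sort (· ≤ ·)).toFinset = s := Finset.sort_toFinset s _
  by_cases hj : j ∈ s
  · obtain ⟨r, hr⟩ := K2 _ hsort j (by rwa [Finset.mem_sort (α := Fin n) (· ≤ ·)] )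
    exact ⟨r, by rw [sprodC_eq_gl, hr, htf, Model.tog, if_pos hj]⟩
  · obtain ⟨r, hr⟩ := K1 _ hsort j (by rwa [Finset.mem_sort (α := Fin n) (· ≤ ·)])
    exact ⟨r, by rw [sprodC_eq_gl, hr, htf, Model.tog, if_neg hj]⟩

/-- K'-not: right multiplication by an absent generator. -/
lemma gK'_not {s : Finset (Fin n)} {j : Fin n} (hj : j ∉ s) :
    ∃ r : ℝ, sprodC n s * gC n j = r • sprodC n (Model.tog j s) := by
  obtain ⟨r, hr⟩ := gK s j
  refine ⟨(-1 : ℝ) ^ s.card * r, ?_⟩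
  have hjl : j ∉ s.sort (· ≤ ·) := by
    rw [Finset.mem_sort (α := Fin n) (· ≤ ·)]; exact hj
  rw [sprodC_eq_gl, gl_mul_g hjl, ← sprodC_eq_gl, hr, Finset.length_sort, smul_smul]

/-- K': right multiplication by any generator, Finset version. -/
lemma gK' (s : Finset (Fin n)) (j : Fin n) :
    ∃ r : ℝ, sprodC n s * gC n j = r • sprodC n (Model.tog j s) := by
  by_cases hj : j ∈ s
  · obtain ⟨r, hr⟩ := gK s j
    have hjE : j ∉ Model.tog j s := by
      rw [Model.tog, if_pos hj]; exact Finset.notMem_erase j s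
    obtain ⟨r2, hr2⟩ := gK'_not hjE
    rw [Model.tog_tog_self] at hr2
    have h1 : sprodC n s = (-r) • (gC n j * sprodC n (Model.tog j s)) := by
      have h0 : -sprodC n s = gC n j * (gC n j * sprodC n s) := by
        rw [← mul_assoc, gsq, neg_one_mul]
      rw [neg_smul, ← mul_smul_comm, ← hr, ← h0, neg_neg]
    refine ⟨-r * r2 * r, ?_⟩
    calc sprodC n s * gC n j = (-r) • (gC n j * (sprodC n (Model.tog j s) * gC n j)) := by
          rw [h1, smul_mul_assoc, mul_assoc]
      _ = (-r) • (gC n j * (r2 • sprodC n s)) := by rw [hr2]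
      _ = (-r * r2) • (gC n j * sprodC n s) := by rw [mul_smul_comm, smul_smul]
      _ = (-r * r2 * r) • sprodC n (Model.tog j s) := by rw [hr, smul_smul]
  · exact gK'_not hj

end CliffLemmas

section Phi
variable {n : ℕ}

/-- The coefficient-extraction map: apply the representation to the delta at `∅`. -/
def phiL (n : ℕ) : Cl n →ₗ[ℝ] Model.V n where
  toFun x := Model2.repC n x (Model2.dl ∅)
  map_add' x y := by simp only [map_add, LinearMap.add_apply]
  map_smul' c x := by simp only [map_smul, LinearMap.smul_apply, RingHom.id_apply]

lemma phiL_gl {l : List (Fin n)} (hl : l.Pairwise (· < ·)) :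
    phiL n (gl n l) = Model2.dl l.toFinset := by
  induction l with
  | nil =>
    show Model2.repC n 1 (Model2.dl ∅) = _
    rw [map_one, Module.End.one_apply, List.toFinset_nil]
  | cons b t ih =>
    rw [List.pairwise_cons] at hl
    show Model2.repC n (gl n (b :: t)) (Model2.dl ∅) = _
    rw [gl_cons, map_mul, Module.End.mul_apply]
    have ht := ih hl.2
    rw [show Model2.repC n (gl n t) (Model2.dl ∅) = Model2.dl t.toFinset from ht]
    rw [Model2.repC_g b t.toFinset (fun x hx => hl.1 x (List.mem_toFinset.1 hx)),
      List.toFinset_cons]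

lemma phiL_sprodC (s : Finset (Fin n)) : phiL n (sprodC n s) = Model2.dl s := by
  rw [sprodC_eq_gl, phiL_gl ((Finset.sortedLT_sort s).pairwise), Finset.sort_toFinset]

end Phi

section XLemmas
open TrivSqZeroExt
variable {d : ℕ}

/-- extension of a vector on `Fin d` to `Fin (d+1)` by zero -/
def extd (d : ℕ) (v : Fin d → ℝ) : Fin (d + 1) → ℝ :=
  fun j => if h : (j : ℕ) < d then v ⟨j, h⟩ else 0

lemma extd_last (v : Fin d → ℝ) : extd d v (Fin.last d) = 0 :=
  dif_neg (by simp)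

lemma iMap_eq (v : Fin d → ℝ) :
    X.iMap d v = inl (CliffordAlgebra.ι (Qn (d + 1)) (extd d v)) := rfl

lemma inr_mul' (b : Cl (d + 1)) (x : Xa d) : inr b * x = inr (b * fst x) := by
  refine TrivSqZeroExt.ext ?_ ?_
  · rw [fst_mul, fst_inr, zero_mul, fst_inr]
  · rw [snd_mul, fst_inr, snd_inr, snd_inr, zero_smul, zero_add, op_smul_eq_mul]

lemma mul_inr' (x : Xa d) (b : Cl (d + 1)) : x * inr b = inr (fst x * b) := by
  refine TrivSqZeroExt.ext ?_ ?_
  · rw [fst_mul, fst_inr, mul_zero, fst_inr]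
  · rw [snd_mul, fst_inr, snd_inr, snd_inr, op_smul_eq_mul, smul_eq_mul,
      mul_zero, add_zero]

lemma eL_mul_eps : X.eL d * X.eps d = inr (gC (d + 1) (Fin.last d)) := by
  rw [X.eL, X.e, X.eps, DualNumber.eps, inl_mul_inr, smul_eq_mul, mul_one]

lemma Pform (v : Fin d → ℝ) :
    X.eL d * X.eps d * X.iMap d v =
      inr (gC (d + 1) (Fin.last d) * CliffordAlgebra.ι (Qn (d + 1)) (extd d v)) := by
  rw [eL_mul_eps, iMap_eq, inr_mul', fst_inl]

lemma zgen_ne_last {j : Fin (d + 1)} (h : j ≠ Fin.last d) :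
    X.zgen d j = inl (gC (d + 1) j) := by
  rw [X.zgen, if_pos (Fin.val_lt_last h)]; rfl

lemma zgen_last : X.zgen d (Fin.last d) = inr (gC (d + 1) (Fin.last d)) := by
  rw [X.zgen, if_neg (by simp), eL_mul_eps]

lemma zgen_prod (l : List (Fin (d + 1))) (hl : l.Nodup) :
    (l.map (X.zgen d)).prod =
      if Fin.last d ∈ l then inr ((l.map (gC (d + 1))).prod)
      else inl ((l.map (gC (d + 1))).prod) := by
  induction l with
  | nil => simp
  | cons a t ih =>
    rw [List.nodup_cons] at hl
    have iht := ih hl.2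
    rw [List.map_cons, List.prod_cons, List.map_cons, List.prod_cons, iht]
    rcases eq_or_ne a (Fin.last d) with rfl | ha
    · rw [if_neg (by intro h; exact hl.1 h), if_pos (List.mem_cons_self), zgen_last,
        inr_mul', fst_inl]
    · rw [zgen_ne_last ha]
      by_cases ht : Fin.last d ∈ t
      · rw [if_pos ht, if_pos (List.mem_cons_of_mem _ ht), inl_mul_inr, smul_eq_mul]
      · rw [if_neg ht, if_neg (by
            intro h
            rcases List.mem_cons.1 h with h | h
            exacts [ha h.symm, ht h]), inl_mul_inl]

lemma sprod_zgen (s : Finset (Fin (d + 1))) :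
    X.sprod d (X.zgen d) s =
      if Fin.last d ∈ s then inr (sprodC (d + 1) s) else inl (sprodC (d + 1) s) := by
  rw [X.sprod, sprodC, zgen_prod _ (Finset.sort_nodup s _)]
  by_cases h : Fin.last d ∈ s
  · rw [if_pos h, if_pos ((Finset.mem_sort (α := Fin (d+1)) (· ≤ ·)).2 h)]
  · rw [if_neg h, if_neg (fun hh => h ((Finset.mem_sort (α := Fin (d+1)) (· ≤ ·)).1 hh))]

/-- The coefficient functional of the `zgen`-monomial indexed by `s`. -/
def coefL (d : ℕ) (s : Finset (Fin (d + 1))) : Xa d →ₗ[ℝ] ℝ where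
  toFun x := phiL (d + 1) (if Fin.last d ∈ s then snd x else fst x) s
  map_add' x y := by
    by_cases h : Fin.last d ∈ s <;>
      simp only [h, if_true, if_false, snd_add, fst_add, map_add, Pi.add_apply]
  map_smul' c x := by
    by_cases h : Fin.last d ∈ s <;>
      simp only [h, if_true, if_false, snd_smul, fst_smul, map_smul, Pi.smul_apply,
        smul_eq_mul, RingHom.id_apply]

lemma coefL_sprod (s t : Finset (Fin (d + 1))) :
    coefL d s (X.sprod d (X.zgen d) t) = if s = t then 1 else 0 := by
  rw [sprod_zgen]
  show phiL (d + 1) (if Fin.last d ∈ s then snd _ else fst _) s = _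
  by_cases ht : Fin.last d ∈ t <;> by_cases hs : Fin.last d ∈ s
  · rw [if_pos ht, if_pos hs, snd_inr, phiL_sprodC]; rfl
  · rw [if_pos ht, if_neg hs, fst_inr, map_zero,
      if_neg (fun h => hs (by rw [h]; exact ht))]; rfl
  · rw [if_neg ht, if_pos hs, snd_inl, map_zero,
      if_neg (fun h => ht (by rw [← h]; exact hs))]; rfl
  · rw [if_neg ht, if_neg hs, fst_inl, phiL_sprodC]; rfl

lemma coefL_inr_zero {s : Finset (Fin (d + 1))} (hs : Fin.last d ∉ s) (b : Cl (d + 1)) :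
    coefL d s (inr b) = 0 := by
  show phiL (d + 1) (if Fin.last d ∈ s then snd _ else fst _) s = 0
  rw [if_neg hs, fst_inr, map_zero]; rfl

lemma Zterms_le_ker {k : ℕ} {s : Finset (Fin (d + 1))} (h : s.card ≠ k) :
    X.Zterms d k ≤ LinearMap.ker (coefL d s) := by
  rw [X.Zterms, Submodule.span_le]
  rintro x ⟨t, htc, rfl⟩
  rw [SetLike.mem_coe, LinearMap.mem_ker, coefL_sprod,
    if_neg (fun hE => h (by rw [hE]; exact htc))]

lemma iota_eq_sum (n : ℕ) (v : Fin n → ℝ) :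
    CliffordAlgebra.ι (Qn n) v = ∑ j, v j • gC n j := by
  conv_lhs => rw [← Finset.univ_sum_single v]
  rw [map_sum]
  refine Finset.sum_congr rfl fun j _ => ?_
  rw [gC, ← map_smul]
  congr 1
  rw [← Pi.single_smul, smul_eq_mul, mul_one]

end XLemmas


section Main
open TrivSqZeroExt
variable {d : ℕ}

lemma inr_sprodC_mem {u : Finset (Fin (d + 1))} (hu : Fin.last d ∈ u) :
    (inr (sprodC (d + 1) u) : Xa d) ∈ X.Zterms d u.card :=
  Submodule.subset_span ⟨u, rfl, by rw [sprod_zgen, if_pos hu]⟩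

lemma Pmul_mem {m : ℕ} {t : Finset (Fin (d + 1))} (ht : t.card = m) (v : Fin d → ℝ) :
    (X.eL d * X.eps d * X.iMap d v) * X.sprod d (X.zgen d) t
      ∈ X.Zterms d m ⊔ X.Zterms d (m + 2) := by
  rw [Pform, sprod_zgen]
  by_cases hlt : Fin.last d ∈ t
  · rw [if_pos hlt, inr_mul', fst_inr, mul_zero, inr_zero]
    exact zero_mem _
  · rw [if_neg hlt, inr_mul', fst_inl]
    set w := sprodC (d + 1) t with hw
    rw [mul_assoc, iota_eq_sum, Finset.sum_mul, Finset.mul_sum]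
    have hterm : ∀ j, gC (d + 1) (Fin.last d) * (extd d v j • gC (d + 1) j * w)
        = extd d v j • (gC (d + 1) (Fin.last d) * (gC (d + 1) j * w)) := by
      intro j; rw [smul_mul_assoc, mul_smul_comm]
    rw [Finset.sum_congr rfl fun j _ => hterm j, inr_sum]
    refine Submodule.sum_mem _ fun j _ => ?_
    rcases eq_or_ne j (Fin.last d) with rfl | hj
    · rw [extd_last, zero_smul]
      exact zero_mem _
    · rw [inr_smul]
      refine Submodule.smul_mem _ _ ?_
      obtain ⟨r1, hr1⟩ := gK t j
      obtain ⟨r2, hr2⟩ := gK (Model.tog j t) (Fin.last d)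
      have hlu : Fin.last d ∉ Model.tog j t := by
        rw [Model.mem_tog_ne (Ne.symm hj)]; exact hlt
      rw [hw, hr1, mul_smul_comm, hr2, smul_smul, inr_smul]
      refine Submodule.smul_mem _ _ ?_
      have hins : Model.tog (Fin.last d) (Model.tog j t) = insert (Fin.last d) (Model.tog j t) := by
        rw [Model.tog, if_neg hlu]
      have hmem : Fin.last d ∈ Model.tog (Fin.last d) (Model.tog j t) := by
        rw [hins]; exact Finset.mem_insert_self _ _
      have hcard : (Model.tog (Fin.last d) (Model.tog j t)).card = (Model.tog j t).card + 1 := by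
        rw [hins, Finset.card_insert_of_notMem hlu]
      by_cases hjt : j ∈ t
      · have hc1 : (Model.tog j t).card + 1 = m := by
          rw [Model.tog, if_pos hjt, Finset.card_erase_of_mem hjt, ht]
          exact Nat.succ_pred_eq_of_pos (ht ▸ Finset.card_pos.2 ⟨j, hjt⟩)
        refine Submodule.mem_sup_left ?_
        have := inr_sprodC_mem (d := d) hmem
        rwa [hcard, hc1] at this
      · have hc1 : (Model.tog j t).card + 1 = m + 2 := by
          rw [Model.tog, if_neg hjt, Finset.card_insert_of_notMem hjt, ht]
        refine Submodule.mem_sup_right ?_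
        have := inr_sprodC_mem (d := d) hmem
        rwa [hcard, hc1] at this

lemma Amul_mem {m : ℕ} {t : Finset (Fin (d + 1))} (ht : t.card = m) (v : Fin d → ℝ) :
    X.sprod d (X.zgen d) t * (X.eL d * X.eps d * X.iMap d v)
      ∈ X.Zterms d m ⊔ X.Zterms d (m + 2) := by
  rw [Pform, sprod_zgen]
  by_cases hlt : Fin.last d ∈ t
  · rw [if_pos hlt, mul_inr', fst_inr, zero_mul, inr_zero]
    exact zero_mem _
  · rw [if_neg hlt, mul_inr', fst_inl]
    set w := sprodC (d + 1) t with hw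
    rw [← mul_assoc, iota_eq_sum, Finset.mul_sum]
    have hterm : ∀ j, w * gC (d + 1) (Fin.last d) * (extd d v j • gC (d + 1) j)
        = extd d v j • (w * gC (d + 1) (Fin.last d) * gC (d + 1) j) := by
      intro j; rw [mul_smul_comm]
    rw [Finset.sum_congr rfl fun j _ => hterm j, inr_sum]
    refine Submodule.sum_mem _ fun j _ => ?_
    rcases eq_or_ne j (Fin.last d) with rfl | hj
    · rw [extd_last, zero_smul]
      exact zero_mem _
    · rw [inr_smul]
      refine Submodule.smul_mem _ _ ?_
      obtain ⟨r1, hr1⟩ := gK'_not (s := t) (j := Fin.last d) hlt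
      obtain ⟨r2, hr2⟩ := gK' (Model.tog (Fin.last d) t) j
      rw [hw, hr1, smul_mul_assoc, hr2, smul_smul, inr_smul]
      refine Submodule.smul_mem _ _ ?_
      have hins : Model.tog (Fin.last d) t = insert (Fin.last d) t := by
        rw [Model.tog, if_neg hlt]
      have hmem : Fin.last d ∈ Model.tog j (Model.tog (Fin.last d) t) := by
        rw [Model.mem_tog_ne (Ne.symm hj), hins]; exact Finset.mem_insert_self _ _
      by_cases hjt : j ∈ t
      · have hc1 : (Model.tog j (Model.tog (Fin.last d) t)).card = m := by
          have hjm : j ∈ Model.tog (Fin.last d) t := by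
            rw [hins]; exact Finset.mem_insert_of_mem hjt
          rw [Model.tog, if_pos hjm, Finset.card_erase_of_mem hjm, hins,
            Finset.card_insert_of_notMem hlt, ht]
          omega
        refine Submodule.mem_sup_left ?_
        have := inr_sprodC_mem (d := d) hmem
        rwa [hc1] at this
      · have hc1 : (Model.tog j (Model.tog (Fin.last d) t)).card = m + 2 := by
          have hjm : j ∉ Model.tog (Fin.last d) t := by
            rw [hins, Finset.mem_insert]
            rintro (rfl | h)
            exacts [hj rfl, hjt h]
          rw [Model.tog, if_neg hjm, Finset.card_insert_of_notMem hjm, hins,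
            Finset.card_insert_of_notMem hlt, ht]
        refine Submodule.mem_sup_right ?_
        have := inr_sprodC_mem (d := d) hmem
        rwa [hc1] at this

end Main

/-- For a fixed even `m ≥ 0`, let `z ∈ Z_d^0 \ {0}` consist entirely
of `m`-terms and let `a, p ∈ ℝ^d`. Then
`(1 + ½e_{d+1}e_{d+2}i(p))·z·(1 − ½e_{d+1}e_{d+2}i(a))` lies in the span of the
`m`-terms and `(m+2)`-terms of `Z_d^0`, and its `m`-term component is nonzero (i.e. it
does not lie in the span of the `(m+2)`-terms alone). -/
theorem tau_of_mterms (d m : ℕ) (hm : Even m) (z : Xa d)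
    (hz : z ∈ X.Zterms d m) (hz0 : z ≠ 0) (a p : Fin d → ℝ) :
    (1 + (2 : ℝ)⁻¹ • (X.eL d * X.eps d * X.iMap d p)) * z *
        (1 - (2 : ℝ)⁻¹ • (X.eL d * X.eps d * X.iMap d a))
      ∈ X.Zterms d m ⊔ X.Zterms d (m + 2) ∧
    (1 + (2 : ℝ)⁻¹ • (X.eL d * X.eps d * X.iMap d p)) * z *
        (1 - (2 : ℝ)⁻¹ • (X.eL d * X.eps d * X.iMap d a))
      ∉ X.Zterms d (m + 2) := by
    classical
  have hzZ := hz
  set P := X.eL d * X.eps d * X.iMap d p with hP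
  set A := X.eL d * X.eps d * X.iMap d a with hA
  have hPinr := hP.trans (Pform p)
  have hAinr := hA.trans (Pform a)
  -- representation of z as a finite combination of m-monomials
  have hrange : X.Zterms d m = Submodule.span ℝ (Set.range
      (fun t : {t : Finset (Fin (d + 1)) // t.card = m} => X.sprod d (X.zgen d) t.1)) := by
    rw [X.Zterms]
    congr 1
    ext x
    constructor
    · rintro ⟨s, hs, rfl⟩; exact ⟨⟨s, hs⟩, rfl⟩
    · rintro ⟨t, rfl⟩; exact ⟨t.1, t.2, rfl⟩
  rw [hrange] at hz
  obtain ⟨c, hc⟩ := (Submodule.mem_span_range_iff_exists_fun ℝ).1 hz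
  have hPz : P * z = ∑ t : {t : Finset (Fin (d + 1)) // t.card = m},
      c t • (P * X.sprod d (X.zgen d) t.1) := by
    rw [← hc, Finset.mul_sum]
    exact Finset.sum_congr rfl fun t _ => mul_smul_comm _ _ _
  have hzA : z * A = ∑ t : {t : Finset (Fin (d + 1)) // t.card = m},
      c t • (X.sprod d (X.zgen d) t.1 * A) := by
    rw [← hc, Finset.sum_mul]
    exact Finset.sum_congr rfl fun t _ => smul_mul_assoc _ _ _
  have hPzmem : P * z ∈ X.Zterms d m ⊔ X.Zterms d (m + 2) := by
    rw [hPz]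
    exact Submodule.sum_mem _ fun t _ => Submodule.smul_mem _ _ (Pmul_mem t.2 p)
  have hzAmem : z * A ∈ X.Zterms d m ⊔ X.Zterms d (m + 2) := by
    rw [hzA]
    exact Submodule.sum_mem _ fun t _ => Submodule.smul_mem _ _ (Amul_mem t.2 a)
  have hPzA : P * z * A = 0 := by
    rw [hPinr, inr_mul', hAinr, mul_inr', TrivSqZeroExt.fst_inr, zero_mul,
      TrivSqZeroExt.inr_zero]
  have hexpand : (1 + (2:ℝ)⁻¹ • P) * z * (1 - (2:ℝ)⁻¹ • A)
      = z + (2:ℝ)⁻¹ • (P * z) - ((2:ℝ)⁻¹ • (z * A) + ((2:ℝ)⁻¹ * (2:ℝ)⁻¹) • (P * z * A)) := by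
    simp only [add_mul, mul_sub, mul_one, one_mul, smul_mul_assoc, mul_smul_comm, smul_smul,
      smul_add]
    try abel
  rw [hPzA, smul_zero, add_zero] at hexpand
  have hzero : ∀ t : {t : Finset (Fin (d + 1)) // t.card = m}, Fin.last d ∈ t.1 →
      P * X.sprod d (X.zgen d) t.1 = 0 ∧ X.sprod d (X.zgen d) t.1 * A = 0 := by
    intro t hlt
    rw [sprod_zgen, if_pos hlt]
    constructor
    · rw [hPinr, inr_mul', TrivSqZeroExt.fst_inr, mul_zero,
        TrivSqZeroExt.inr_zero]
    · rw [hAinr, mul_inr', TrivSqZeroExt.fst_inr, zero_mul, TrivSqZeroExt.inr_zero]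
  have hcoef : ∀ t0 : {t : Finset (Fin (d + 1)) // t.card = m}, coefL d t0.1 z = c t0 := by
    intro t0
    rw [← hc, map_sum, Finset.sum_eq_single t0]
    · rw [map_smul, coefL_sprod, if_pos rfl, smul_eq_mul, mul_one]
    · intro t _ hne
      rw [map_smul, coefL_sprod, if_neg (fun hE => hne (Subtype.ext hE.symm)), smul_zero]
    · intro h; exact absurd (Finset.mem_univ _) h
  constructor
  · rw [hexpand]
    exact Submodule.sub_mem _
      (Submodule.add_mem _ (Submodule.mem_sup_left hzZ) (Submodule.smul_mem _ _ hPzmem))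
      (Submodule.smul_mem _ _ hzAmem)
  · intro hmem
    have hex : ∃ t, c t ≠ 0 := by
      by_contra hno
      push_neg at hno
      exact hz0 (by rw [← hc]; exact Finset.sum_eq_zero fun t _ => by rw [hno t, zero_smul])
    by_cases hcase : ∃ t0 : {t : Finset (Fin (d + 1)) // t.card = m},
        c t0 ≠ 0 ∧ Fin.last d ∉ t0.1
    · obtain ⟨t0, hct0, hlast⟩ := hcase
      have hker : coefL d t0.1
          ((1 + (2:ℝ)⁻¹ • P) * z * (1 - (2:ℝ)⁻¹ • A)) = 0 :=
        LinearMap.mem_ker.1 (Zterms_le_ker (by rw [t0.2]; omega) hmem)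
      rw [hexpand, map_sub, map_add, map_smul, map_smul] at hker
      have h1 : coefL d t0.1 (P * z) = 0 := by
        rw [hPinr, inr_mul']
        exact coefL_inr_zero hlast _
      have h2 : coefL d t0.1 (z * A) = 0 := by
        rw [hAinr, mul_inr']
        exact coefL_inr_zero hlast _
      rw [h1, h2, smul_zero, add_zero, sub_zero, hcoef t0] at hker
      exact hct0 hker
    · push_neg at hcase
      obtain ⟨t0, hct0⟩ := hex
      have hPz0 : P * z = 0 := by
        rw [hPz]
        refine Finset.sum_eq_zero fun t _ => ?_
        by_cases hct : c t = 0
        · rw [hct, zero_smul]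
        · rw [(hzero t (hcase t hct)).1, smul_zero]
      have hzA0 : z * A = 0 := by
        rw [hzA]
        refine Finset.sum_eq_zero fun t _ => ?_
        by_cases hct : c t = 0
        · rw [hct, zero_smul]
        · rw [(hzero t (hcase t hct)).2, smul_zero]
      rw [hPz0, hzA0, smul_zero, add_zero, sub_zero] at hexpand
      have hker : coefL d t0.1
          ((1 + (2:ℝ)⁻¹ • P) * z * (1 - (2:ℝ)⁻¹ • A)) = 0 :=
        LinearMap.mem_ker.1 (Zterms_le_ker (by rw [t0.2]; omega) hmem)
      rw [hexpand, hcoef t0] at hker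
      exact hct0 hker
end
end
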